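/- arXiv:1907.05502 — 7 statements merged into one kernel-verified Lean document; each statement's English description precedes it below -/
import Mathlib

section
/- For every sequence a in the class S and every subset I ⊆ ℕ, one has d̄_a(I) ≤ B̄d(I). -/
open Filter Topology

/-- The weighted sum `∑_{j=0}^{N} a_j · 1_A(j)`. -/
noncomputable def wSum (a : ℕ → ℝ) (A : Set ℕ) (N : ℕ) : ℝ :=
  ∑ j ∈ Finset.range (N + 1), Set.indicator A a j

/-- The upper `a`-density `d̄_a(A)`. -/
noncomputable def upperDensWith (a : ℕ → ℝ) (A : Set ℕ) : ℝ :=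
  Filter.limsup (fun N => wSum a A N / ∑ j ∈ Finset.range (N + 1), a j) Filter.atTop

/-- The lower `a`-density `d_a(A)`. -/
noncomputable def lowerDensWith (a : ℕ → ℝ) (A : Set ℕ) : ℝ :=
  Filter.liminf (fun N => wSum a A N / ∑ j ∈ Finset.range (N + 1), a j) Filter.atTop

/-- The (unweighted) upper density `d̄(A)`. -/
noncomputable def upperDens (A : Set ℕ) : ℝ :=
  Filter.limsup
    (fun N : ℕ => (∑ j ∈ Finset.range (N + 1), Set.indicator A (fun _ => (1 : ℝ)) j) / (N + 1))
    Filter.atTop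

/-- The upper Banach density `B̄d(A) = lim_N b_N / N`, `b_N = limsup_k #(A ∩ [k+1, k+N])`
(the limit exists, so it coincides with the limsup used here). -/
noncomputable def upperBanachDens (A : Set ℕ) : ℝ :=
  Filter.limsup
    (fun N : ℕ =>
      (Filter.limsup
          (fun k : ℕ => ∑ j ∈ Finset.Icc (k + 1) (k + N), Set.indicator A (fun _ => (1 : ℝ)) j)
          Filter.atTop) / (N : ℝ))
    Filter.atTop

/-- `v_n(a) = a_n / ∑_{j=0}^{n-1} a_j`. -/
noncomputable def vSeq (a : ℕ → ℝ) (n : ℕ) : ℝ := a n / ∑ j ∈ Finset.range n, a j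

/-- The class `S` of weights: positive non-decreasing sequences tending to `+∞` such that
`(v_n(a))_{n ≥ 1}` is non-increasing and tends to `0`. -/
def memS (a : ℕ → ℝ) : Prop :=
  (∀ n, 0 < a n) ∧ Monotone a ∧ Filter.Tendsto a Filter.atTop Filter.atTop ∧
    (∀ m n : ℕ, 1 ≤ m → m ≤ n → vSeq a n ≤ vSeq a m) ∧
    Filter.Tendsto (vSeq a) Filter.atTop (nhds 0)

/-- `A - k = {n : n + k ∈ A}`. -/
def shiftSet (A : Set ℕ) (k : ℕ) : Set ℕ := {n : ℕ | n + k ∈ A}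

/-- A set of natural numbers has bounded gaps (is syndetic). -/
def Syndetic (K : Set ℕ) : Prop := ∃ m : ℕ, ∀ n : ℕ, (K ∩ Set.Icc n (n + m)).Nonempty

/-- The return set `N(x, U) = {n : T^n x ∈ U}`. -/
def retSet {X : Type*} [NormedAddCommGroup X] [NormedSpace ℂ X] (T : X →L[ℂ] X) (x : X)
    (U : Set X) : Set ℕ :=
  {n : ℕ | (T ^ n) x ∈ U}

/-- The set of hypercyclic vectors of `T`. -/
def HCSet {X : Type*} [NormedAddCommGroup X] [NormedSpace ℂ X] (T : X →L[ℂ] X) : Set X :=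
  {x : X | Dense (Set.range fun n : ℕ => (T ^ n) x)}

/-- The set of `U`-frequently hypercyclic vectors of `T`. -/
def UFHCSet {X : Type*} [NormedAddCommGroup X] [NormedSpace ℂ X] (T : X →L[ℂ] X) : Set X :=
  {x : X | ∀ U : Set X, IsOpen U → U.Nonempty → 0 < upperDens (retSet T x U)}

/-- The set of `U`-frequently hypercyclic vectors of `T` with respect to the weight `a`. -/
def UFHCaSet {X : Type*} [NormedAddCommGroup X] [NormedSpace ℂ X] (a : ℕ → ℝ)
    (T : X →L[ℂ] X) : Set X :=
  {x : X | ∀ U : Set X, IsOpen U → U.Nonempty → 0 < upperDensWith a (retSet T x U)}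

/-- The set of reiteratively hypercyclic vectors of `T`. -/
def RHCSet {X : Type*} [NormedAddCommGroup X] [NormedSpace ℂ X] (T : X →L[ℂ] X) : Set X :=
  {x : X | ∀ U : Set X, IsOpen U → U.Nonempty → 0 < upperBanachDens (retSet T x U)}

/-- `T` is `𝒜`-hypercyclic. -/
def AHC {X : Type*} [NormedAddCommGroup X] [NormedSpace ℂ X] (𝒜 : Set (Set ℕ))
    (T : X →L[ℂ] X) : Prop :=
  ∃ x : X, ∀ U : Set X, IsOpen U → U.Nonempty → retSet T x U ∈ 𝒜

/-- The `n`-fold product `T × ⋯ × T` acting diagonally on `Fin n → X`. -/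
noncomputable def nfold {X : Type*} [NormedAddCommGroup X] [NormedSpace ℂ X] (T : X →L[ℂ] X)
    (n : ℕ) : (Fin n → X) →L[ℂ] (Fin n → X) :=
  ContinuousLinearMap.pi fun i => T.comp (ContinuousLinearMap.proj i)

section Aux

private lemma sumP_pos {a : ℕ → ℝ} (hpos : ∀ n, 0 < a n) {n : ℕ} (hn : 1 ≤ n) :
    0 < ∑ j ∈ Finset.range n, a j :=
  Finset.sum_pos (fun j _ => hpos j) (Finset.nonempty_range_iff.mpr (by omega))

private lemma a_eq_v_mul {a : ℕ → ℝ} (hpos : ∀ n, 0 < a n) {n : ℕ} (hn : 1 ≤ n) :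
    a n = vSeq a n * ∑ j ∈ Finset.range n, a j := by
  rw [vSeq, div_mul_cancel₀]
  exact (sumP_pos hpos hn).ne'

private lemma v_nonneg {a : ℕ → ℝ} (hpos : ∀ n, 0 < a n) {n : ℕ} (hn : 1 ≤ n) :
    0 ≤ vSeq a n :=
  div_nonneg (hpos n).le (sumP_pos hpos hn).le

private lemma P_growth {a : ℕ → ℝ} (hpos : ∀ n, 0 < a n)
    (hvmono : ∀ m n : ℕ, 1 ≤ m → m ≤ n → vSeq a n ≤ vSeq a m)
    {n : ℕ} (hn : 1 ≤ n) (d : ℕ) :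
    ∑ j ∈ Finset.range (n + d), a j ≤ (1 + vSeq a n) ^ d * ∑ j ∈ Finset.range n, a j := by
  induction d with
  | zero => simp
  | succ d ih =>
      have h1 : ∑ j ∈ Finset.range (n + d + 1), a j
          = (1 + vSeq a (n + d)) * ∑ j ∈ Finset.range (n + d), a j := by
        rw [Finset.sum_range_succ, a_eq_v_mul hpos (by omega : 1 ≤ n + d)]
        ring
      have h2 : vSeq a (n + d) ≤ vSeq a n := hvmono n (n + d) hn (by omega)
      have h3 : 0 ≤ vSeq a n := v_nonneg hpos hn
      have h4 : 0 < ∑ j ∈ Finset.range (n + d), a j := sumP_pos hpos (by omega)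
      have h5 : (1 + vSeq a (n + d)) * ∑ j ∈ Finset.range (n + d), a j
          ≤ (1 + vSeq a n) * ∑ j ∈ Finset.range (n + d), a j := by nlinarith
      have h6 : (1 + vSeq a n) * ∑ j ∈ Finset.range (n + d), a j
          ≤ (1 + vSeq a n) * ((1 + vSeq a n) ^ d * ∑ j ∈ Finset.range n, a j) := by
        apply mul_le_mul_of_nonneg_left ih (by linarith)
      calc ∑ j ∈ Finset.range (n + (d+1)), a j
          = (1 + vSeq a (n + d)) * ∑ j ∈ Finset.range (n + d), a j := by
            rw [← h1]; ring_nf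
        _ ≤ (1 + vSeq a n) * ((1 + vSeq a n) ^ d * ∑ j ∈ Finset.range n, a j) :=
            le_trans h5 h6
        _ = (1 + vSeq a n) ^ (d+1) * ∑ j ∈ Finset.range n, a j := by ring

private lemma a_growth {a : ℕ → ℝ} (hpos : ∀ n, 0 < a n)
    (hvmono : ∀ m n : ℕ, 1 ≤ m → m ≤ n → vSeq a n ≤ vSeq a m)
    {n : ℕ} (hn : 1 ≤ n) (d : ℕ) :
    a (n + d) ≤ (1 + vSeq a n) ^ d * a n := by
  have h1 : a (n + d) = vSeq a (n + d) * ∑ j ∈ Finset.range (n + d), a j :=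
    a_eq_v_mul hpos (by omega)
  have h2 : vSeq a (n + d) ≤ vSeq a n := hvmono n (n + d) hn (by omega)
  have h3 : 0 ≤ vSeq a (n + d) := v_nonneg hpos (by omega)
  have h4 := P_growth hpos hvmono hn d
  have h5 : 0 < ∑ j ∈ Finset.range (n + d), a j := sumP_pos hpos (by omega)
  have h6 : vSeq a (n + d) * ∑ j ∈ Finset.range (n + d), a j
      ≤ vSeq a n * ((1 + vSeq a n) ^ d * ∑ j ∈ Finset.range n, a j) := by
    calc vSeq a (n + d) * ∑ j ∈ Finset.range (n + d), a j
        ≤ vSeq a n * ∑ j ∈ Finset.range (n + d), a j := by nlinarith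
      _ ≤ vSeq a n * ((1 + vSeq a n) ^ d * ∑ j ∈ Finset.range n, a j) :=
          mul_le_mul_of_nonneg_left h4 (v_nonneg hpos hn)
  rw [h1]
  calc vSeq a (n + d) * ∑ j ∈ Finset.range (n + d), a j
      ≤ vSeq a n * ((1 + vSeq a n) ^ d * ∑ j ∈ Finset.range n, a j) := h6
    _ = (1 + vSeq a n) ^ d * (vSeq a n * ∑ j ∈ Finset.range n, a j) := by ring
    _ = (1 + vSeq a n) ^ d * a n := by rw [← a_eq_v_mul hpos hn]

private lemma ind_one_nonneg (I : Set ℕ) (j : ℕ) :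
    0 ≤ Set.indicator I (fun _ => (1:ℝ)) j :=
  Set.indicator_nonneg (fun _ _ => zero_le_one) j

private lemma ind_one_le_one (I : Set ℕ) (j : ℕ) :
    Set.indicator I (fun _ => (1:ℝ)) j ≤ 1 := by
  classical
  by_cases h : j ∈ I <;> simp [Set.indicator_apply, h]

private lemma ind_le_mul {a : ℕ → ℝ} (I : Set ℕ) {j : ℕ} {c : ℝ}
    (h : a j ≤ c) (h0 : 0 ≤ a j) : Set.indicator I a j ≤ c * Set.indicator I (fun _ => (1:ℝ)) j := by
  classical
  by_cases hj : j ∈ I <;> simp [Set.indicator_apply, hj, h]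

private lemma ind_nonneg {a : ℕ → ℝ} (hpos : ∀ n, 0 < a n) (I : Set ℕ) (j : ℕ) :
    0 ≤ Set.indicator I a j :=
  Set.indicator_nonneg (fun i _ => (hpos i).le) j

private lemma Ioc_eq_Icc_succ (L m : ℕ) : Finset.Ioc L m = Finset.Icc (L+1) m := by
  ext x
  simp only [Finset.mem_Ioc, Finset.mem_Icc]
  omega

private lemma sum_Ioc_split (f : ℕ → ℝ) {a b c : ℕ} (hab : a ≤ b) (hbc : b ≤ c) :
    (∑ j ∈ Finset.Ioc a b, f j) + ∑ j ∈ Finset.Ioc b c, f j = ∑ j ∈ Finset.Ioc a c, f j := by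
  rw [← Finset.sum_union, Finset.Ioc_union_Ioc_eq_Ioc hab hbc]
  refine Finset.disjoint_left.mpr fun x hx hx' => ?_
  simp only [Finset.mem_Ioc] at hx hx'
  omega

end Aux

set_option maxHeartbeats 1000000 in
/-- For every `a ∈ S` and every `I ⊆ ℕ`, `d̄_a(I) ≤ B̄d(I)`. -/
theorem stmt_1 (a : ℕ → ℝ) (ha : memS a) (I : Set ℕ) :
    upperDensWith a I ≤ upperBanachDens I := by
  classical
  obtain ⟨hpos, hmono, htop, hvmono, hvzero⟩ := ha
  set B := upperBanachDens I with hBdef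
  -- the window-count function
  set cnt : ℕ → ℕ → ℝ :=
    fun N k => ∑ j ∈ Finset.Icc (k+1) (k+N), Set.indicator I (fun _ => (1:ℝ)) j with hcnt
  have hcnt_nonneg : ∀ N k, 0 ≤ cnt N k := fun N k =>
    Finset.sum_nonneg fun j _ => ind_one_nonneg I j
  have hcnt_le : ∀ N k, cnt N k ≤ (N : ℝ) := by
    intro N k
    calc cnt N k ≤ ∑ _j ∈ Finset.Icc (k+1) (k+N), (1:ℝ) :=
          Finset.sum_le_sum fun j _ => ind_one_le_one I j
      _ = (N : ℝ) := by
          rw [Finset.sum_const, Nat.card_Icc, nsmul_eq_mul, mul_one]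
          congr 1
          omega
  have hb_bdd : ∀ N, Filter.IsBoundedUnder (· ≤ ·) Filter.atTop (cnt N) := fun N =>
    Filter.isBoundedUnder_of ⟨(N:ℝ), fun k => hcnt_le N k⟩
  have hb_cobdd : ∀ N, Filter.IsCoboundedUnder (· ≤ ·) Filter.atTop (cnt N) := fun N =>
    Filter.isCoboundedUnder_le_of_le Filter.atTop (fun k => hcnt_nonneg N k)
  have hb_le : ∀ N, Filter.limsup (cnt N) Filter.atTop ≤ (N:ℝ) := fun N =>
    Filter.limsup_le_of_le (hb_cobdd N) (Filter.Eventually.of_forall (hcnt_le N))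
  have hb_nonneg : ∀ N, 0 ≤ Filter.limsup (cnt N) Filter.atTop := fun N =>
    Filter.le_limsup_of_frequently_le
      (Filter.Frequently.of_forall (hcnt_nonneg N)) (hb_bdd N)
  -- the Banach-density ratio sequence
  set g : ℕ → ℝ := fun N => Filter.limsup (cnt N) Filter.atTop / (N:ℝ) with hgdef
  have hBg : B = Filter.limsup g Filter.atTop := rfl
  have hg_nonneg : ∀ N, 0 ≤ g N := fun N => div_nonneg (hb_nonneg N) (Nat.cast_nonneg N)
  have hg_le_one : ∀ N, g N ≤ 1 := by
    intro N
    rcases Nat.eq_zero_or_pos N with h | h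
    · simp [hgdef, h]
    · rw [hgdef]
      exact div_le_one_of_le₀ (hb_le N) (Nat.cast_nonneg N)
  have hB_le_one : B ≤ 1 := by
    rw [hBg]
    exact Filter.limsup_le_of_le
      (Filter.isCoboundedUnder_le_of_le Filter.atTop hg_nonneg)
      (Filter.Eventually.of_forall hg_le_one)
  clear_value B cnt g
  -- main estimate: for every positive η, upperDensWith a I ≤ B + η
  refine le_of_forall_pos_le_add fun η ηpos => ?_
  set ε : ℝ := min (η/9) 1 with hεdef
  have εpos : 0 < ε := lt_min (by linarith) one_pos
  have hεle1 : ε ≤ 1 := min_le_right _ _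
  have hε9 : 9 * ε ≤ η := by
    have := min_le_left (η/9) 1
    have : ε ≤ η / 9 := this
    linarith
  clear_value ε
  -- choose a good window length N
  have hevN : ∀ᶠ N in Filter.atTop, g N < B + ε := by
    refine Filter.eventually_lt_of_limsup_lt ?_ ?_
    · rw [← hBg]; linarith
    · exact Filter.isBoundedUnder_of ⟨1, hg_le_one⟩
  obtain ⟨N, hNg, hN1⟩ := (hevN.and (Filter.eventually_ge_atTop 1)).exists
  have hNpos : (0:ℝ) < (N:ℝ) := by exact_mod_cast hN1
  set c : ℝ := B + ε with hcdef
  have hbN : Filter.limsup (cnt N) Filter.atTop < c * N := by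
    rw [hcdef]
    rw [hgdef] at hNg
    exact (div_lt_iff₀ hNpos).mp hNg
  -- good starting point K₁ for window counts
  obtain ⟨K₁, hK₁⟩ := Filter.eventually_atTop.mp
    (Filter.eventually_lt_of_limsup_lt hbN (hb_bdd N))
  have hc0 : 0 ≤ c := by
    have h1 := hK₁ K₁ le_rfl
    have h2 := hcnt_nonneg N K₁
    nlinarith
  clear_value c
  -- good starting point K₂ for the weight regularity
  have hv1 : Filter.Tendsto (fun n => (1 + vSeq a n)^(N-1)) Filter.atTop (nhds 1) := by
    have h := (tendsto_const_nhds (x := (1:ℝ)) (f := Filter.atTop)).add hvzero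
    have h2 := h.pow (N-1)
    simpa using h2
  have hev3 : ∀ᶠ n in Filter.atTop, (1 + vSeq a n)^(N-1) < 1 + ε :=
    hv1.eventually_lt_const (by linarith)
  have hev4 : ∀ᶠ n in Filter.atTop, vSeq a n < ε / N :=
    hvzero.eventually_lt_const (div_pos εpos hNpos)
  obtain ⟨K₂, hK₂⟩ := Filter.eventually_atTop.mp (hev3.and hev4)
  set K : ℕ := max K₁ K₂ + 1 with hKdef
  have hKK₁ : K₁ ≤ K := by omega
  have hKK₂ : K₂ ≤ K := by omega
  have hKone : 1 ≤ K := by omega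
  clear_value K
  -- growth control on blocks
  have hgrow : ∀ L, K ≤ L → a (L + N) ≤ (1 + ε) * a (L + 1) := by
    intro L hL
    have h5 := a_growth hpos hvmono (show 1 ≤ L + 1 by omega) (N - 1)
    have heq : L + 1 + (N - 1) = L + N := by omega
    rw [heq] at h5
    have h6 : (1 + vSeq a (L+1))^(N-1) < 1 + ε := (hK₂ (L+1) (by omega)).1
    nlinarith [hpos (L+1)]
  -- tail control
  have htail : ∀ M, K ≤ M → (N:ℝ) * a M ≤ ε * ∑ j ∈ Finset.range (M+1), a j := by
    intro M hM
    have hv := (hK₂ M (by omega)).2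
    have hM1 : 1 ≤ M := le_trans hKone hM
    have haM := a_eq_v_mul hpos hM1
    have hPpos := sumP_pos hpos hM1
    have hPS : ∑ j ∈ Finset.range M, a j ≤ ∑ j ∈ Finset.range (M+1), a j := by
      rw [Finset.sum_range_succ]
      nlinarith [hpos M]
    have hvN : vSeq a M * N ≤ ε := by
      have := (lt_div_iff₀ hNpos).mp hv
      linarith
    nlinarith [v_nonneg hpos hM1]
  -- single block estimate
  have hblock : ∀ L, K ≤ L →
      (∑ j ∈ Finset.Ioc L (L+N), Set.indicator I a j)
        ≤ c * (1+ε) * ∑ j ∈ Finset.Ioc L (L+N), a j := by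
    intro L hL
    have h1 : ∑ j ∈ Finset.Ioc L (L+N), Set.indicator I a j
        ≤ a (L+N) * ∑ j ∈ Finset.Ioc L (L+N), Set.indicator I (fun _ => (1:ℝ)) j := by
      rw [Finset.mul_sum]
      refine Finset.sum_le_sum fun j hj => ?_
      exact ind_le_mul I (hmono (Finset.mem_Ioc.mp hj).2) (hpos j).le
    have h2 : ∑ j ∈ Finset.Ioc L (L+N), Set.indicator I (fun _ => (1:ℝ)) j ≤ c * N := by
      have h := (hK₁ L (le_trans hKK₁ hL)).le
      simp only [hcnt] at h
      rw [Ioc_eq_Icc_succ]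
      exact h
    have h3 : (N:ℝ) * a (L+1) ≤ ∑ j ∈ Finset.Ioc L (L+N), a j := by
      have hcard : (Finset.Ioc L (L+N)).card = N := by rw [Nat.card_Ioc]; omega
      calc (N:ℝ) * a (L+1) = (Finset.Ioc L (L+N)).card • a (L+1) := by
            rw [hcard, nsmul_eq_mul]
        _ ≤ ∑ j ∈ Finset.Ioc L (L+N), a j :=
            Finset.card_nsmul_le_sum _ _ _ fun j hj => hmono (Finset.mem_Ioc.mp hj).1
    have h4 := hgrow L hL
    have haLN : 0 ≤ a (L+N) := (hpos _).le
    have s1 : a (L+N) * ∑ j ∈ Finset.Ioc L (L+N), Set.indicator I (fun _ => (1:ℝ)) j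
        ≤ a (L+N) * (c * N) := mul_le_mul_of_nonneg_left h2 haLN
    have s2 : (c * N) * a (L+N) ≤ (c * N) * ((1+ε) * a (L+1)) :=
      mul_le_mul_of_nonneg_left h4 (mul_nonneg hc0 (Nat.cast_nonneg N))
    have s3 : (c * (1+ε)) * ((N:ℝ) * a (L+1)) ≤ (c * (1+ε)) * ∑ j ∈ Finset.Ioc L (L+N), a j :=
      mul_le_mul_of_nonneg_left h3 (mul_nonneg hc0 (by linarith : (0:ℝ) ≤ 1 + ε))
    nlinarith
  -- multi-block estimate
  have hQ : ∀ M, K ≤ M → ∃ L, K ≤ L ∧ L ≤ M ∧ M ≤ L + N ∧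
      (∑ j ∈ Finset.Ioc K L, Set.indicator I a j)
        ≤ c * (1+ε) * ∑ j ∈ Finset.Ioc K L, a j := by
    intro M
    induction M using Nat.strong_induction_on with
    | _ M ih =>
      intro hKM
      by_cases hMN : M ≤ K + N
      · exact ⟨K, le_rfl, hKM, by omega, by simp⟩
      · obtain ⟨L, h1, h2, h3, h4⟩ := ih (M - N) (by omega) (by omega)
        refine ⟨L + N, by omega, by omega, by omega, ?_⟩
        rw [← sum_Ioc_split (Set.indicator I a) h1 (by omega),
            ← sum_Ioc_split a h1 (by omega)]
        have hb := hblock L h1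
        nlinarith
  -- the denominator tends to infinity
  have hS_top : Filter.Tendsto (fun M => ∑ j ∈ Finset.range (M+1), a j)
      Filter.atTop Filter.atTop := by
    apply Filter.tendsto_atTop_mono _ htop
    intro M
    exact Finset.single_le_sum (fun j _ => (hpos j).le) (Finset.self_mem_range_succ M)
  set D : ℝ := ε + c * (1+ε) + c * ε with hDdef
  clear_value D
  have hmain : ∀ᶠ M in Filter.atTop,
      wSum a I M / (∑ j ∈ Finset.range (M+1), a j) ≤ D := by
    filter_upwards [hS_top.eventually_ge_atTop (wSum a I K / ε),
      Filter.eventually_ge_atTop K] with M hSM hKM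
    have hSpos : 0 < ∑ j ∈ Finset.range (M+1), a j := sumP_pos hpos (by omega)
    rw [div_le_iff₀ hSpos]
    obtain ⟨L, hKL, hLM, hMLN, hbound⟩ := hQ M hKM
    -- decomposition
    have e1 : ∀ f : ℕ → ℝ, ∑ j ∈ Finset.range (M+1), f j
        = (∑ j ∈ Finset.range (K+1), f j) + ∑ j ∈ Finset.Ioc K M, f j := by
      intro f
      have hIcoIoc : Finset.Ico (K+1) (M+1) = Finset.Ioc K M := by
        ext x
        simp only [Finset.mem_Ico, Finset.mem_Ioc]
        omega
      rw [Finset.range_eq_Ico,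
        ← Finset.sum_Ico_consecutive f (by omega : 0 ≤ K+1) (by omega : K+1 ≤ M+1), hIcoIoc, Finset.range_eq_Ico]
    have e2 : ∀ f : ℕ → ℝ, ∑ j ∈ Finset.Ioc K M, f j
        = (∑ j ∈ Finset.Ioc K L, f j) + ∑ j ∈ Finset.Ioc L M, f j :=
      fun f => (sum_Ioc_split f hKL hLM).symm
    have hdecomp : wSum a I M = wSum a I K + (∑ j ∈ Finset.Ioc K L, Set.indicator I a j)
        + ∑ j ∈ Finset.Ioc L M, Set.indicator I a j := by
      rw [wSum, e1 (Set.indicator I a), e2 (Set.indicator I a)]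
      rw [wSum]
      ring
    -- head
    have hhead : wSum a I K ≤ ε * ∑ j ∈ Finset.range (M+1), a j := by
      rw [div_le_iff₀ εpos] at hSM
      linarith
    -- middle
    have hmid2 : ∑ j ∈ Finset.Ioc K L, a j ≤ ∑ j ∈ Finset.range (M+1), a j := by
      apply Finset.sum_le_sum_of_subset_of_nonneg
      · intro j hj
        have := (Finset.mem_Ioc.mp hj).2
        exact Finset.mem_range.mpr (by omega)
      · exact fun j _ _ => (hpos j).le
    have hmid : (∑ j ∈ Finset.Ioc K L, Set.indicator I a j)
        ≤ c * (1+ε) * ∑ j ∈ Finset.range (M+1), a j :=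
      le_trans hbound (mul_le_mul_of_nonneg_left hmid2
        (mul_nonneg hc0 (by linarith : (0:ℝ) ≤ 1 + ε)))
    -- tail
    have htail1 : ∑ j ∈ Finset.Ioc L M, Set.indicator I a j
        ≤ c * (ε * ∑ j ∈ Finset.range (M+1), a j) := by
      have t1 : ∑ j ∈ Finset.Ioc L M, Set.indicator I a j
          ≤ a M * ∑ j ∈ Finset.Ioc L M, Set.indicator I (fun _ => (1:ℝ)) j := by
        rw [Finset.mul_sum]
        refine Finset.sum_le_sum fun j hj => ?_
        exact ind_le_mul I (hmono (Finset.mem_Ioc.mp hj).2) (hpos j).le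
      have t2 : ∑ j ∈ Finset.Ioc L M, Set.indicator I (fun _ => (1:ℝ)) j
          ≤ ∑ j ∈ Finset.Ioc L (L+N), Set.indicator I (fun _ => (1:ℝ)) j := by
        apply Finset.sum_le_sum_of_subset_of_nonneg
        · exact Finset.Ioc_subset_Ioc_right hMLN
        · exact fun j _ _ => ind_one_nonneg I j
      have t3 : ∑ j ∈ Finset.Ioc L (L+N), Set.indicator I (fun _ => (1:ℝ)) j ≤ c * N := by
        have h := (hK₁ L (by omega)).le
        simp only [hcnt] at h
        rw [Ioc_eq_Icc_succ]
        exact h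
      have t4 := htail M hKM
      have haM : 0 ≤ a M := (hpos M).le
      have t5 : a M * ∑ j ∈ Finset.Ioc L M, Set.indicator I (fun _ => (1:ℝ)) j
          ≤ a M * (c * N) :=
        mul_le_mul_of_nonneg_left (le_trans t2 t3) haM
      have t6 : c * ((N:ℝ) * a M) ≤ c * (ε * ∑ j ∈ Finset.range (M+1), a j) :=
        mul_le_mul_of_nonneg_left t4 hc0
      nlinarith
    rw [hdecomp, hDdef]
    nlinarith
  -- conclude
  have hfinal : upperDensWith a I ≤ D := by
    apply Filter.limsup_le_of_le _ hmain
    apply Filter.isCoboundedUnder_le_of_le Filter.atTop (x := 0)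
    intro M
    apply div_nonneg _ (sumP_pos hpos (by omega : 1 ≤ M + 1)).le
    exact Finset.sum_nonneg fun j _ => ind_nonneg hpos I j
  have : D ≤ B + η := by
    rw [hDdef, hcdef]
    nlinarith
  linarith
end

section
/- Let (A_n)_{n∈ℕ} be any sequence of subsets of ℕ. Then there exists a sequence a in the class S such that for every n ∈ ℕ, B̄d(A_n) ≤ e·d̄_a(A_n), where e is Euler's number. -/
open Filter Topology

noncomputable def cnt (A : Set ℕ) (t k : ℕ) : ℝ :=
  ∑ j ∈ Finset.Ioc k (k + t), Set.indicator A (fun _ => (1:ℝ)) j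

noncomputable def bseq (A : Set ℕ) (t : ℕ) : ℝ := Filter.limsup (cnt A t) Filter.atTop

lemma cnt_nonneg (A : Set ℕ) (t k : ℕ) : 0 ≤ cnt A t k :=
  Finset.sum_nonneg fun j _ => Set.indicator_nonneg (fun _ _ => zero_le_one) j

lemma cnt_le (A : Set ℕ) (t k : ℕ) : cnt A t k ≤ t := by
  have : cnt A t k ≤ ∑ j ∈ Finset.Ioc k (k + t), (1:ℝ) :=
    Finset.sum_le_sum fun j _ => Set.indicator_apply_le' (fun _ => le_rfl) (fun _ => zero_le_one)
  simpa using this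

lemma cnt_bdd (A : Set ℕ) (t : ℕ) : IsBoundedUnder (· ≤ ·) atTop (cnt A t) :=
  isBoundedUnder_of ⟨t, fun k => cnt_le A t k⟩

lemma cnt_cobdd (A : Set ℕ) (t : ℕ) : IsCoboundedUnder (· ≤ ·) atTop (cnt A t) :=
  IsBoundedUnder.isCoboundedUnder_le (isBoundedUnder_of ⟨0, fun k => cnt_nonneg A t k⟩)

lemma bseq_nonneg (A : Set ℕ) (t : ℕ) : 0 ≤ bseq A t :=
  le_limsup_of_frequently_le (Frequently.of_forall fun k => cnt_nonneg A t k) (cnt_bdd A t)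

lemma bseq_le (A : Set ℕ) (t : ℕ) : bseq A t ≤ t :=
  limsup_le_of_le (cnt_cobdd A t) (Eventually.of_forall fun k => cnt_le A t k)

lemma upperBanachDens_eq (A : Set ℕ) :
    upperBanachDens A = Filter.limsup (fun N => bseq A N / N) Filter.atTop := by
  unfold upperBanachDens bseq cnt
  congr 1
  funext N
  congr 2
  funext k
  rw [Finset.Icc_add_one_left_eq_Ioc]
lemma cnt_split (A : Set ℕ) (t k : ℕ) : ∀ q : ℕ,
    ∑ j ∈ Finset.Ioc k (k + q * t), Set.indicator A (fun _ => (1:ℝ)) j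
      = ∑ j ∈ Finset.range q, cnt A t (k + j * t) := by
  intro q
  induction q with
  | zero => simp
  | succ q ih =>
    have h : k + (q+1) * t = (k + q * t) + t := by ring
    rw [Finset.sum_range_succ, ← ih, h,
      ← Finset.sum_Ioc_consecutive _ (Nat.le_add_right k (q*t)) (Nat.le_add_right _ t)]
    rfl

lemma bseq_le_mul (A : Set ℕ) (N t : ℕ) (ht : 1 ≤ t) :
    bseq A N ≤ ((N / t : ℕ) + 1) * bseq A t := by
  set q : ℕ := N / t + 1 with hq
  have hNq : N ≤ q * t := by
    have h2 := Nat.mod_lt N (show 0 < t by omega)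
    calc N = t * (N/t) + N % t := (Nat.div_add_mod N t).symm
      _ ≤ t * (N/t) + t := Nat.add_le_add_left (le_of_lt h2) _
      _ = (N/t+1)*t := by ring
  have key : ∀ ε : ℝ, 0 < ε → bseq A N ≤ q * (bseq A t + ε) := by
    intro ε hε
    have hlt : limsup (cnt A t) atTop < bseq A t + ε := lt_add_of_pos_right _ hε
    have hev := eventually_lt_of_limsup_lt hlt (cnt_bdd A t)
    rcases eventually_atTop.1 hev with ⟨K, hK⟩
    apply limsup_le_of_le (cnt_cobdd A N)
    filter_upwards [eventually_ge_atTop K] with k hk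
    have h1 : cnt A N k ≤ ∑ j ∈ Finset.range q, cnt A t (k + j * t) := by
      rw [← cnt_split]
      apply Finset.sum_le_sum_of_subset_of_nonneg
      · exact Finset.Ioc_subset_Ioc le_rfl (by omega)
      · intro j _ _; exact Set.indicator_nonneg (fun _ _ => zero_le_one) j
    have h2 : ∑ j ∈ Finset.range q, cnt A t (k + j * t)
        ≤ ∑ _j ∈ Finset.range q, (bseq A t + ε) :=
      Finset.sum_le_sum fun j _ => le_of_lt (hK _ (by omega))
    have h3 : ∑ _j ∈ Finset.range q, (bseq A t + ε) = q * (bseq A t + ε) := by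
      rw [Finset.sum_const, Finset.card_range, nsmul_eq_mul]
    linarith [h1.trans h2]
  have key2 : ∀ ε : ℝ, 0 < ε → bseq A N ≤ q * bseq A t + ε := by
    intro ε hε
    have hq0 : (0:ℝ) < q := by positivity
    have h := key (ε / q) (by positivity)
    calc bseq A N ≤ q * (bseq A t + ε / q) := h
      _ = q * bseq A t + ε := by field_simp
  have h := le_of_forall_pos_le_add key2
  rw [hq] at h
  push_cast at h ⊢
  linarith

lemma ubd_le (A : Set ℕ) (t : ℕ) (ht : 1 ≤ t) :
    upperBanachDens A ≤ bseq A t / t := by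
  rw [upperBanachDens_eq]
  have hcb : IsCoboundedUnder (· ≤ ·) atTop (fun N : ℕ => bseq A N / N) :=
    Filter.isCoboundedUnder_le_of_eventually_le atTop (x := 0)
      (Eventually.of_forall fun N => div_nonneg (bseq_nonneg A N) (Nat.cast_nonneg N))
  have key : ∀ ε : ℝ, 0 < ε → limsup (fun N : ℕ => bseq A N / N) atTop ≤ bseq A t / t + ε := by
    intro ε hε
    apply limsup_le_of_le hcb
    have hbt := bseq_nonneg A t
    have htR : (0:ℝ) < t := by exact_mod_cast ht
    rcases exists_nat_gt ((bseq A t + 1) / ε) with ⟨K, hK⟩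
    filter_upwards [eventually_ge_atTop (K + 1)] with N hN
    have hNR : (0:ℝ) < N := by exact_mod_cast (show 0 < N by omega)
    have h1 : bseq A N ≤ ((N / t : ℕ) + 1) * bseq A t := bseq_le_mul A N t ht
    have h2 : ((N / t : ℕ) : ℝ) + 1 ≤ (N:ℝ) / t + 1 := by
      have h3 : ((N / t : ℕ) : ℝ) ≤ (N:ℝ) / t := by
        rw [le_div_iff₀ htR]
        exact_mod_cast Nat.div_mul_le_self N t
      linarith
    have h4 : bseq A N ≤ ((N:ℝ) / t + 1) * bseq A t :=
      h1.trans (mul_le_mul_of_nonneg_right h2 hbt)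
    have h5 : bseq A N / N ≤ bseq A t / t + bseq A t / N := by
      rw [div_le_iff₀ hNR]
      calc bseq A N ≤ ((N:ℝ) / t + 1) * bseq A t := h4
        _ = (bseq A t / t + bseq A t / N) * N := by field_simp
    have h6 : bseq A t / N ≤ ε := by
      rw [div_le_iff₀ hNR]
      rw [div_lt_iff₀ hε] at hK
      have hKN : (K:ℝ) ≤ N := by exact_mod_cast (show K ≤ N by omega)
      nlinarith
    linarith
  linarith [le_of_forall_pos_le_add key]
def Mseq (g : ℕ → ℕ → ℕ) : ℕ → ℕ
  | 0 => 0
  | t+1 => g t (Mseq g t)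

def blkOf (M : ℕ → ℕ) (n : ℕ) : ℕ := Nat.findGreatest (fun t => M t ≤ n) n

noncomputable def vOf (M : ℕ → ℕ) (n : ℕ) : ℝ := (blkOf M n : ℝ)⁻¹

noncomputable def SOf (M : ℕ → ℕ) (n : ℕ) : ℝ := ∏ j ∈ Finset.Icc 1 n, (1 + vOf M j)

noncomputable def aOf (M : ℕ → ℕ) (n : ℕ) : ℝ := if n = 0 then 1 else vOf M n * SOf M (n-1)

section Blocks

variable {M : ℕ → ℕ} (hM : ∀ t, M t + t^4 + 1 ≤ M (t+1)) (hM1 : M 1 = 1)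

include hM

lemma M_strictMono : StrictMono M :=
  strictMono_nat_of_lt_succ fun t => by have := hM t; omega

lemma M_le (t : ℕ) : t ≤ M t := (M_strictMono hM).le_apply

lemma blk_ge {t n : ℕ} (h : M t ≤ n) : t ≤ blkOf M n :=
  Nat.le_findGreatest (P := fun t => M t ≤ n) (le_trans (M_le hM t) h) h

include hM1

lemma blk_pos {n : ℕ} (hn : 1 ≤ n) : 1 ≤ blkOf M n :=
  blk_ge hM (show M 1 ≤ n by rw [hM1]; exact hn)

lemma blk_le {n : ℕ} (hn : 1 ≤ n) : M (blkOf M n) ≤ n :=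
  Nat.findGreatest_spec (P := fun t => M t ≤ n) (m := 1) hn (show M 1 ≤ n by rw [hM1]; exact hn)

omit hM1 in
lemma lt_M_blk_succ {n : ℕ} (hn : 1 ≤ n) : n < M (blkOf M n + 1) := by
  by_contra hc
  push_neg at hc
  have h := Nat.le_findGreatest (P := fun t => M t ≤ n) (m := blkOf M n + 1)
    (le_trans (M_le hM _) hc) hc
  have h2 : blkOf M n + 1 ≤ blkOf M n := h
  omega

lemma blk_eq {t n : ℕ} (ht : 1 ≤ t) (h1 : M t ≤ n) (h2 : n < M (t+1)) : blkOf M n = t := by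
  refine le_antisymm ?_ (blk_ge hM h1)
  by_contra hc
  push_neg at hc
  have h3 : M (t+1) ≤ M (blkOf M n) := (M_strictMono hM).monotone hc
  have hn : 1 ≤ n := le_trans ht (le_trans (M_le hM t) h1)
  have h4 : M (blkOf M n) ≤ n := blk_le hM hM1 hn
  omega

lemma blk_succ_le (n : ℕ) : blkOf M (n+1) ≤ blkOf M n + 1 := by
  by_contra hc
  push_neg at hc
  set b := blkOf M (n+1) with hb
  have hble : M b ≤ n + 1 := blk_le hM hM1 (by omega)
  obtain ⟨s, hs⟩ : ∃ s, b = s + 1 := ⟨b - 1, by omega⟩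
  rw [hs] at hble
  have h1 := hM s
  have h2 : M s ≤ n := by omega
  have h3 : s ≤ blkOf M n := blk_ge hM h2
  omega

omit hM hM1 in
lemma blk_mono : Monotone (blkOf M) := fun m n h =>
  Nat.findGreatest_mono (fun t ht => le_trans ht h) h

lemma blk_one : blkOf M 1 = 1 :=
  blk_eq hM hM1 le_rfl (le_of_eq hM1) (by have := hM 1; simp only [one_pow] at this; omega)

lemma vOf_pos {n : ℕ} (hn : 1 ≤ n) : 0 < vOf M n := by
  have h := blk_pos hM hM1 hn
  unfold vOf
  positivity

omit hM hM1 in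
lemma SOf_one_le (n : ℕ) : 1 ≤ SOf M n := by
  unfold SOf
  have h := Finset.prod_le_prod (s := Finset.Icc 1 n) (f := fun _ => (1:ℝ))
    (g := fun j => 1 + vOf M j) (fun _ _ => zero_le_one)
    (fun j _ => by show (1:ℝ) ≤ 1 + vOf M j
                   have h : (0:ℝ) ≤ vOf M j := by unfold vOf; positivity
                   linarith)
  simpa using h

omit hM hM1 in
lemma SOf_pos (n : ℕ) : 0 < SOf M n := lt_of_lt_of_le one_pos (SOf_one_le n)

omit hM hM1 in
lemma SOf_succ (n : ℕ) : SOf M (n+1) = SOf M n * (1 + vOf M (n+1)) := by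
  unfold SOf
  rw [Finset.prod_Icc_succ_top (by omega)]

omit hM hM1 in
lemma aOf_succ (n : ℕ) : aOf M (n+1) = vOf M (n+1) * SOf M n := by
  unfold aOf; simp

lemma aOf_pos (n : ℕ) : 0 < aOf M n := by
  match n with
  | 0 => simp [aOf]
  | Nat.succ m =>
    rw [aOf_succ]
    exact mul_pos (vOf_pos hM hM1 (by omega)) (SOf_pos _)

omit hM hM1 in
lemma sum_aOf (n : ℕ) : ∑ j ∈ Finset.range (n+1), aOf M j = SOf M n := by
  induction n with
  | zero => simp [aOf, SOf]
  | succ n ih =>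
    rw [Finset.sum_range_succ, ih, SOf_succ, aOf_succ]
    ring

lemma aOf_mono : Monotone (aOf M) := by
  apply monotone_nat_of_le_succ
  intro n
  match n with
  | 0 =>
    have h3 : vOf M 1 = 1 := by unfold vOf; rw [blk_one hM hM1]; simp
    have h2 : SOf M 0 = 1 := by unfold SOf; simp
    rw [aOf_succ, h3, h2]
    simp [aOf]
  | Nat.succ m =>
    rw [aOf_succ, aOf_succ, SOf_succ]
    have hS := SOf_pos (M := M) m
    have hbm : blkOf M (m+1) ≤ blkOf M (m+2) := blk_mono (by omega)
    have hbs : blkOf M (m+2) ≤ blkOf M (m+1) + 1 := blk_succ_le hM hM1 (m+1)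
    have hb1 : 1 ≤ blkOf M (m+1) := blk_pos hM hM1 (by omega)
    have key : vOf M (m+1) ≤ vOf M (m+2) * (1 + vOf M (m+1)) := by
      have hbR : (0:ℝ) < (blkOf M (m+1) : ℝ) := by exact_mod_cast hb1
      rcases eq_or_lt_of_le hbs with h | h
      · have : vOf M (m+2) * (1 + vOf M (m+1)) = vOf M (m+1) := by
          unfold vOf
          rw [h]
          push_cast
          field_simp
        linarith
      · have heq : blkOf M (m+2) = blkOf M (m+1) := le_antisymm (by omega) hbm
        unfold vOf
        rw [heq]
        have hv : (0:ℝ) < (blkOf M (m+1) : ℝ)⁻¹ := by positivity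
        nlinarith
    nlinarith [mul_le_mul_of_nonneg_right key hS.le]

omit hM hM1 in
lemma vSeq_aOf {n : ℕ} (hn : 1 ≤ n) : vSeq (aOf M) n = vOf M n := by
  obtain ⟨m, rfl⟩ : ∃ m, n = m + 1 := ⟨n - 1, by omega⟩
  unfold vSeq
  rw [sum_aOf m, aOf_succ, mul_div_assoc, div_self (ne_of_gt (SOf_pos m)), mul_one]

end Blocks
section Blocks2

variable {M : ℕ → ℕ} (hM : ∀ t, M t + t^4 + 1 ≤ M (t+1)) (hM1 : M 1 = 1)

include hM hM1

omit hM hM1 in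
lemma aOf_of_pos {n : ℕ} (hn : 1 ≤ n) : aOf M n = vOf M n * SOf M (n-1) := by
  unfold aOf; rw [if_neg (by omega)]

lemma SOf_lower {n : ℕ} (h3 : 3 ≤ blkOf M n) : ((blkOf M n : ℝ) - 1)^3 ≤ SOf M (n-1) := by
  set t := blkOf M n with htdef
  have hn1 : 1 ≤ n := by
    by_contra hc
    have : n = 0 := by omega
    rw [this] at htdef
    simp [blkOf] at htdef
    omega
  have hMt : M t ≤ n := blk_le hM hM1 hn1
  have hsub : Finset.Icc (M (t-1)) (M t - 1) ⊆ Finset.Icc 1 (n-1) := by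
    apply Finset.Icc_subset_Icc
    · have := M_le hM (t-1); omega
    · omega
  have hblk : ∀ j ∈ Finset.Icc (M (t-1)) (M t - 1), blkOf M j = t - 1 := by
    intro j hj
    rw [Finset.mem_Icc] at hj
    have hMt' : M ((t-1)+1) = M t := by congr 1; omega
    have hMle := M_le hM t
    have h2' : j < M ((t-1)+1) := by rw [hMt']; omega
    exact blk_eq hM hM1 (by omega) hj.1 h2'
  have hprodpos : ∀ s : Finset ℕ, (1:ℝ) ≤ ∏ j ∈ s, (1 + vOf M j) := by
    intro s
    have h := Finset.prod_le_prod (s := s) (f := fun _ => (1:ℝ))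
      (g := fun j => 1 + vOf M j) (fun _ _ => zero_le_one)
      (fun j _ => by show (1:ℝ) ≤ 1 + vOf M j
                     have h : (0:ℝ) ≤ vOf M j := by unfold vOf; positivity
                     linarith)
    simpa using h
  have h1 : ∏ j ∈ Finset.Icc (M (t-1)) (M t - 1), (1 + vOf M j) ≤ SOf M (n-1) := by
    unfold SOf
    rw [← Finset.prod_sdiff hsub]
    exact le_mul_of_one_le_left (le_trans zero_le_one (hprodpos _)) (hprodpos _)
  have h2 : ∏ j ∈ Finset.Icc (M (t-1)) (M t - 1), (1 + vOf M j)
      = (1 + ((t:ℝ)-1)⁻¹)^(M t - M (t-1)) := by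
    have hfun : ∀ j ∈ Finset.Icc (M (t-1)) (M t - 1), (1 + vOf M j) = (1 + ((t:ℝ)-1)⁻¹) := by
      intro j hj
      unfold vOf
      rw [hblk j hj]
      have hc : ((t - 1 : ℕ) : ℝ) = (t:ℝ) - 1 := by
        push_cast [Nat.cast_sub (show 1 ≤ t by omega)]
        ring
      rw [hc]
    rw [Finset.prod_congr rfl hfun, Finset.prod_const, Nat.card_Icc]
    congr 1
    have h4 := hM (t-1)
    have hMt' : M ((t-1)+1) = M t := by congr 1; omega
    rw [hMt'] at h4
    have := M_le hM t
    omega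
  have hcard : (t-1)^4 + 1 ≤ M t - M (t-1) := by
    have h4 := hM (t-1)
    have h5 : (t-1) + 1 = t := by omega
    rw [h5] at h4
    omega
  have htR : (0:ℝ) < (t:ℝ) - 1 := by
    have : (3:ℝ) ≤ (t:ℝ) := by exact_mod_cast h3
    linarith
  have hx : (0:ℝ) < ((t:ℝ)-1)⁻¹ := by positivity
  have h6 : (1 + ((t:ℝ)-1)⁻¹)^((t-1)^4 + 1) ≤ (1 + ((t:ℝ)-1)⁻¹)^(M t - M (t-1)) :=
    pow_le_pow_right₀ (by linarith) hcard
  have h7 : 1 + (((t-1)^4 + 1 : ℕ) : ℝ) * ((t:ℝ)-1)⁻¹ ≤ (1 + ((t:ℝ)-1)⁻¹)^((t-1)^4 + 1) :=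
    one_add_mul_le_pow (by linarith) _
  have h8 : ((t:ℝ)-1)^3 ≤ 1 + (((t-1)^4 + 1 : ℕ) : ℝ) * ((t:ℝ)-1)⁻¹ := by
    have hc : (((t-1)^4 + 1 : ℕ) : ℝ) = ((t:ℝ)-1)^4 + 1 := by
      push_cast [Nat.cast_sub (by omega : 1 ≤ t)]
      ring
    rw [hc]
    rw [← sub_nonneg]
    have key : 1 + (((t:ℝ)-1)^4 + 1) * ((t:ℝ)-1)⁻¹ - ((t:ℝ)-1)^3
        = (1 + ((t:ℝ)-1)⁻¹) := by
      field_simp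
      ring
    rw [key]
    positivity
  calc ((t:ℝ)-1)^3 ≤ _ := h8
    _ ≤ _ := h7
    _ ≤ _ := h6
    _ = _ := h2.symm
    _ ≤ _ := h1

lemma aOf_tendsto : Filter.Tendsto (aOf M) Filter.atTop Filter.atTop := by
  apply tendsto_atTop_atTop_of_monotone (aOf_mono hM hM1)
  intro b
  obtain ⟨C, hC⟩ := exists_nat_ge b
  refine ⟨M (C + 3), ?_⟩
  set n := M (C + 3) with hn
  have hblk : C + 3 ≤ blkOf M n := blk_ge hM le_rfl
  set t := blkOf M n with htdef
  have hn1 : 1 ≤ n := le_trans (by omega) (M_le hM (C+3))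
  have hS := SOf_lower hM hM1 (show 3 ≤ t by omega)
  have htR : (3:ℝ) ≤ (t:ℝ) := by exact_mod_cast (by omega : 3 ≤ t)
  have ha : aOf M n = vOf M n * SOf M (n-1) := aOf_of_pos hn1
  have hv : vOf M n = (t:ℝ)⁻¹ := rfl
  have h1 : ((t:ℝ)-1) ≤ (t:ℝ)⁻¹ * ((t:ℝ)-1)^3 := by
    have ht0 : (0:ℝ) < t := by linarith
    rw [inv_mul_eq_div, le_div_iff₀ ht0]
    have h9 : (0:ℝ) ≤ ((t:ℝ)-1) * ((t:ℝ)^2 - 3*(t:ℝ) + 1) :=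
      mul_nonneg (by linarith) (by nlinarith)
    nlinarith [h9]
  have h2 : (t:ℝ)⁻¹ * ((t:ℝ)-1)^3 ≤ aOf M n := by
    rw [ha, hv]
    have : (0:ℝ) ≤ (t:ℝ)⁻¹ := by positivity
    exact mul_le_mul_of_nonneg_left hS this
  have h3 : b ≤ (t:ℝ) - 1 := by
    have : ((C:ℝ) + 3) ≤ (t:ℝ) := by exact_mod_cast hblk
    linarith
  linarith

lemma vOf_nonneg (n : ℕ) : 0 ≤ vOf M n := by unfold vOf; positivity

lemma vOf_anti {m n : ℕ} (hm : 1 ≤ m) (hmn : m ≤ n) : vOf M n ≤ vOf M m := by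
  have h1 : 1 ≤ blkOf M m := blk_pos hM hM1 hm
  have h2 : blkOf M m ≤ blkOf M n := blk_mono hmn
  unfold vOf
  apply inv_anti₀
  · exact_mod_cast h1
  · exact_mod_cast h2

lemma vOf_tendsto : Filter.Tendsto (vOf M) Filter.atTop (nhds 0) := by
  rw [tendsto_order]
  constructor
  · intro x hx
    exact Eventually.of_forall fun n => lt_of_lt_of_le hx (vOf_nonneg hM hM1 n)
  · intro x hx
    obtain ⟨t, ht⟩ := exists_nat_one_div_lt hx
    rw [eventually_atTop]
    refine ⟨M (t+1), fun n hn => ?_⟩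
    have hblk : t + 1 ≤ blkOf M n := blk_ge hM hn
    have h1 : vOf M n ≤ ((t:ℝ)+1)⁻¹ := by
      unfold vOf
      apply inv_anti₀ (by positivity)
      exact_mod_cast hblk
    calc vOf M n ≤ ((t:ℝ)+1)⁻¹ := h1
      _ = 1/((t:ℝ)+1) := by rw [one_div]
      _ < x := ht

lemma aOf_window {t k : ℕ} (ht : 1 ≤ t) (h1 : M t ≤ k) (h2 : k + t < M (t+1)) :
    aOf M (k+1) = (t:ℝ)⁻¹ * SOf M k := by
  rw [aOf_succ]
  unfold vOf
  rw [blk_eq hM hM1 ht (by omega) (by omega)]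

lemma SOf_window {t k : ℕ} (ht : 1 ≤ t) (h1 : M t ≤ k) (h2 : k + t < M (t+1)) :
    SOf M (k+t) = SOf M k * (1 + (t:ℝ)⁻¹)^t := by
  unfold SOf
  rw [show Finset.Icc 1 (k+t) = Finset.Ioc 0 (k+t) from Finset.Icc_add_one_left_eq_Ioc 0 (k+t),
    show Finset.Icc 1 k = Finset.Ioc 0 k from Finset.Icc_add_one_left_eq_Ioc 0 k,
    ← Finset.prod_Ioc_consecutive _ (Nat.zero_le k) (Nat.le_add_right k t)]
  congr 1
  have hblk : ∀ j ∈ Finset.Ioc k (k+t), blkOf M j = t := by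
    intro j hj
    rw [Finset.mem_Ioc] at hj
    exact blk_eq hM hM1 ht (by omega) (by omega)
  rw [Finset.prod_congr rfl (fun j hj => by unfold vOf; rw [hblk j hj]),
    Finset.prod_const, Nat.card_Ioc]
  congr 1
  omega

end Blocks2

lemma one_add_inv_pow_le_exp {t : ℕ} (ht : 1 ≤ t) : (1 + (t:ℝ)⁻¹)^t ≤ Real.exp 1 := by
  have ht0 : (0:ℝ) < t := by exact_mod_cast ht
  have h1 : (1 + (t:ℝ)⁻¹) ≤ Real.exp ((t:ℝ)⁻¹) := by
    have := Real.add_one_le_exp ((t:ℝ)⁻¹)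
    linarith
  calc (1 + (t:ℝ)⁻¹)^t ≤ (Real.exp ((t:ℝ)⁻¹))^t :=
        pow_le_pow_left₀ (by positivity) h1 t
    _ = Real.exp ((t:ℝ) * (t:ℝ)⁻¹) := by rw [← Real.exp_nat_mul]
    _ = Real.exp 1 := by rw [mul_inv_cancel₀ (ne_of_gt ht0)]

lemma ind_const_mul (A : Set ℕ) (c : ℝ) (j : ℕ) :
    Set.indicator A (fun _ => c) j = c * Set.indicator A (fun _ => (1:ℝ)) j := by
  by_cases h : j ∈ A <;> simp [h]

def gSeq (pick : ℕ → ℕ → ℕ → ℕ) (t prev : ℕ) : ℕ :=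
  (Finset.range t).sup (fun m => pick t m prev + t) + prev + t^4 + 1

lemma exists_M (pick : ℕ → ℕ → ℕ → ℕ) :
    ∃ M : ℕ → ℕ, (∀ t, M t + t^4 + 1 ≤ M (t+1)) ∧ M 1 = 1 ∧
      ∀ t m, m < t → pick t m (M t) + t < M (t+1) := by
  refine ⟨Mseq (gSeq pick), ?_, ?_, ?_⟩
  · intro t
    have h : Mseq (gSeq pick) (t+1) = gSeq pick t (Mseq (gSeq pick) t) := rfl
    rw [h]
    unfold gSeq
    omega
  · norm_num [Mseq, gSeq]
  · intro t m hm
    have h : Mseq (gSeq pick) (t+1) = gSeq pick t (Mseq (gSeq pick) t) := rfl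
    have hsup : pick t m (Mseq (gSeq pick) t) + t
        ≤ (Finset.range t).sup (fun m => pick t m (Mseq (gSeq pick) t) + t) :=
      Finset.le_sup (f := fun m => pick t m (Mseq (gSeq pick) t) + t) (Finset.mem_range.2 hm)
    have h2 : gSeq pick t (Mseq (gSeq pick) t)
        = (Finset.range t).sup (fun m => pick t m (Mseq (gSeq pick) t) + t)
          + (Mseq (gSeq pick) t) + t^4 + 1 := rfl
    rw [h, h2]
    omega
/-- For any sequence `(A_n)` of subsets of `ℕ` there exists `a ∈ S` such that
`B̄d(A_n) ≤ e · d̄_a(A_n)` for every `n`. -/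
theorem stmt_2 (A : ℕ → Set ℕ) :
    ∃ a : ℕ → ℝ, memS a ∧
      ∀ n : ℕ, upperBanachDens (A n) ≤ Real.exp 1 * upperDensWith a (A n) := by
  have hpickT : ∀ t m K : ℕ, ∃ k, K ≤ k ∧
      (1 ≤ t → bseq (A m) t - 1/(t:ℝ) < cnt (A m) t k) := by
    intro t m K
    by_cases ht : 1 ≤ t
    · have htR : (0:ℝ) < 1/(t:ℝ) := by
        have h : (0:ℝ) < (t:ℝ) := by exact_mod_cast ht
        positivity
      have hfreq : ∃ᶠ k in atTop, bseq (A m) t - 1/(t:ℝ) < cnt (A m) t k :=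
        frequently_lt_of_lt_limsup (cnt_cobdd (A m) t) (by
          show bseq (A m) t - 1/(t:ℝ) < bseq (A m) t
          linarith)
      obtain ⟨k, hk1, hk2⟩ := frequently_atTop.1 hfreq K
      exact ⟨k, hk1, fun _ => hk2⟩
    · exact ⟨K, le_rfl, fun h => absurd h ht⟩
  choose pick hpickK hpickC using hpickT
  obtain ⟨M, hM, hM1, hWin⟩ := exists_M pick
  refine ⟨aOf M, ⟨aOf_pos hM hM1, aOf_mono hM hM1, aOf_tendsto hM hM1, ?_, ?_⟩, ?_⟩
  · intro m n hm hmn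
    rw [vSeq_aOf hm, vSeq_aOf (le_trans hm hmn)]
    exact vOf_anti hM hM1 hm hmn
  · apply Tendsto.congr' _ (vOf_tendsto hM hM1)
    filter_upwards [eventually_ge_atTop 1] with n hn
    exact (vSeq_aOf hn).symm
  · intro m
    have hE0 : (0:ℝ) < Real.exp 1 := Real.exp_pos 1
    have hindnn : ∀ j, 0 ≤ Set.indicator (A m) (aOf M) j :=
      fun j => Set.indicator_nonneg (fun x _ => (aOf_pos hM hM1 x).le) j
    have hwnn : ∀ N, 0 ≤ wSum (aOf M) (A m) N :=
      fun N => Finset.sum_nonneg fun j _ => hindnn j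
    have hrw : upperDensWith (aOf M) (A m)
        = limsup (fun N => wSum (aOf M) (A m) N / SOf M N) atTop := by
      unfold upperDensWith
      congr 1
      funext N
      rw [sum_aOf]
    have hbdd : IsBoundedUnder (· ≤ ·) atTop
        (fun N => wSum (aOf M) (A m) N / SOf M N) := by
      apply isBoundedUnder_of
      refine ⟨1, fun N => ?_⟩
      rw [div_le_one (SOf_pos N), ← sum_aOf (M := M) N]
      apply Finset.sum_le_sum
      intro j _
      exact Set.indicator_apply_le' (fun _ => le_rfl) (fun _ => (aOf_pos hM hM1 j).le)
    have hfreq : ∀ ε : ℝ, 0 < ε → ∀ K : ℕ, ∃ N, K ≤ N ∧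
        (upperBanachDens (A m) - ε) / Real.exp 1 ≤ wSum (aOf M) (A m) N / SOf M N := by
      intro ε hε K
      obtain ⟨t0, ht0⟩ := exists_nat_gt (1/ε)
      set t := max (max (m+1) K) (t0+1) with htdef
      have ht1 : 1 ≤ t := le_trans (by omega) (le_max_right _ _)
      have htm : m < t := lt_of_lt_of_le (Nat.lt_succ_self m) (le_trans (le_max_left _ _) (le_max_left _ _))
      have htK : K ≤ t := le_trans (le_max_right _ _) (le_max_left _ _)
      have htR : (0:ℝ) < (t:ℝ) := by exact_mod_cast ht1
      have htε : 1 < (t:ℝ) * ε := by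
        have h1 : (1/ε) < (t:ℝ) := by
          calc (1/ε) < (t0:ℝ) := ht0
            _ ≤ (t:ℝ) := by exact_mod_cast le_trans (by omega) (le_max_right (max (m+1) K) (t0+1))
        rw [div_lt_iff₀ hε] at h1
        linarith [mul_comm (t:ℝ) ε]
      set k := pick t m (M t) with hkdef
      have hk1 : M t ≤ k := hpickK t m (M t)
      have hcnt : bseq (A m) t - 1/(t:ℝ) < cnt (A m) t k := hpickC t m (M t) ht1
      have hk2 : k + t < M (t+1) := hWin t m htm
      refine ⟨k + t, ?_, ?_⟩
      · calc K ≤ t := htK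
          _ ≤ M t := M_le hM t
          _ ≤ k := hk1
          _ ≤ k + t := by omega
      set B := bseq (A m) t with hB
      set δ := upperBanachDens (A m) with hδ
      have hδB : (t:ℝ) * δ ≤ B := by
        have h := ubd_le (A m) t ht1
        rw [← hδ, ← hB] at h
        rw [mul_comm]
        calc δ * t ≤ (B / t) * t := mul_le_mul_of_nonneg_right h htR.le
          _ = B := by field_simp
      by_cases hsgn : B - 1/(t:ℝ) < 0
      · -- negative numerator: LHS is negative, RHS nonnegative
        have hδsmall : δ - ε < 0 := by
          have h1 : (t:ℝ) * δ < 1/(t:ℝ) := by linarith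
          have h2 : 1/(t:ℝ) ≤ 1 := by
            rw [div_le_one htR]
            exact_mod_cast ht1
          nlinarith
        have hL : (δ - ε) / Real.exp 1 ≤ 0 := div_nonpos_of_nonpos_of_nonneg hδsmall.le hE0.le
        exact le_trans hL (div_nonneg (hwnn _) (SOf_pos _).le)
      · push_neg at hsgn
        -- main chain
        have haw : aOf M (k+1) = (t:ℝ)⁻¹ * SOf M k := aOf_window hM hM1 ht1 hk1 hk2
        have hSw : SOf M (k+t) = SOf M k * (1 + (t:ℝ)⁻¹)^t := SOf_window hM hM1 ht1 hk1 hk2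
        have hexp : (1 + (t:ℝ)⁻¹)^t ≤ Real.exp 1 := one_add_inv_pow_le_exp ht1
        have hpow0 : (0:ℝ) < (1 + (t:ℝ)⁻¹)^t := by positivity
        have hS0 : (0:ℝ) < SOf M k := SOf_pos k
        -- lower bound for wSum
        have hw2 : aOf M (k+1) * cnt (A m) t k
            ≤ ∑ j ∈ Finset.Ioc k (k+t), Set.indicator (A m) (aOf M) j := by
          unfold cnt
          rw [Finset.mul_sum]
          apply Finset.sum_le_sum
          intro j hj
          rw [Finset.mem_Ioc] at hj
          rw [← ind_const_mul]
          exact Set.indicator_le_indicator (aOf_mono hM hM1 (by omega : k+1 ≤ j))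
        have hw1 : ∑ j ∈ Finset.Ioc k (k+t), Set.indicator (A m) (aOf M) j
            ≤ wSum (aOf M) (A m) (k+t) := by
          unfold wSum
          apply Finset.sum_le_sum_of_subset_of_nonneg
          · intro j hj
            rw [Finset.mem_Ioc] at hj
            rw [Finset.mem_range]
            omega
          · intro j _ _
            exact hindnn j
        have hw3 : aOf M (k+1) * (B - 1/(t:ℝ)) ≤ wSum (aOf M) (A m) (k+t) := by
          have h := mul_le_mul_of_nonneg_left hcnt.le (aOf_pos hM hM1 (k+1)).le
          linarith [hw2.trans hw1]
        -- divide by SOf M (k+t)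
        have hfN : aOf M (k+1) * (B - 1/(t:ℝ)) / SOf M (k+t)
            ≤ wSum (aOf M) (A m) (k+t) / SOf M (k+t) := by
          exact div_le_div_of_nonneg_right hw3 (SOf_pos _).le
        have heq : aOf M (k+1) * (B - 1/(t:ℝ)) / SOf M (k+t)
            = (B - 1/(t:ℝ)) / ((t:ℝ) * (1 + (t:ℝ)⁻¹)^t) := by
          rw [haw, hSw]
          field_simp
        have hstep1 : (δ - ε) / Real.exp 1 ≤ (B - 1/(t:ℝ)) / ((t:ℝ) * Real.exp 1) := by
          rw [div_le_div_iff₀ hE0 (by positivity)]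
          have h1t : 1/(t:ℝ) ≤ 1 := by
            rw [div_le_one htR]
            exact_mod_cast ht1
          nlinarith
        have hstep2 : (B - 1/(t:ℝ)) / ((t:ℝ) * Real.exp 1)
            ≤ (B - 1/(t:ℝ)) / ((t:ℝ) * (1 + (t:ℝ)⁻¹)^t) := by
          apply div_le_div_of_nonneg_left hsgn (by positivity)
          exact mul_le_mul_of_nonneg_left hexp htR.le
        calc (δ - ε) / Real.exp 1 ≤ (B - 1/(t:ℝ)) / ((t:ℝ) * Real.exp 1) := hstep1
          _ ≤ (B - 1/(t:ℝ)) / ((t:ℝ) * (1 + (t:ℝ)⁻¹)^t) := hstep2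
          _ = aOf M (k+1) * (B - 1/(t:ℝ)) / SOf M (k+t) := heq.symm
          _ ≤ wSum (aOf M) (A m) (k+t) / SOf M (k+t) := hfN
    -- conclude
    have hlim : ∀ ε : ℝ, 0 < ε →
        (upperBanachDens (A m) - ε) / Real.exp 1 ≤ upperDensWith (aOf M) (A m) := by
      intro ε hε
      rw [hrw]
      apply le_limsup_of_frequently_le _ hbdd
      rw [frequently_atTop]
      intro K
      obtain ⟨N, hN1, hN2⟩ := hfreq ε hε K
      exact ⟨N, hN1, hN2⟩
    have hfinal : ∀ ε : ℝ, 0 < ε →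
        upperBanachDens (A m) ≤ Real.exp 1 * upperDensWith (aOf M) (A m) + ε := by
      intro ε hε
      have h := hlim ε hε
      rw [div_le_iff₀ hE0] at h
      have := mul_comm (upperDensWith (aOf M) (A m)) (Real.exp 1)
      linarith
    exact le_of_forall_pos_le_add hfinal
end

section
/- For every sequence a in the class S, there exists an infinite set A ⊆ ℕ such that B̄d(A) = 1 and d̄_a(A) = 0. -/
open Filter Topology

/-- For every `a ∈ S` there is an infinite set `A ⊆ ℕ` with `B̄d(A) = 1` and `d̄_a(A) = 0`. -/
theorem stmt_3 (a : ℕ → ℝ) (ha : memS a) :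
    ∃ A : Set ℕ, A.Infinite ∧ upperBanachDens A = 1 ∧ upperDensWith a A = 0 := by
  obtain ⟨hpos, hmono, hatop, hvmono, hv0⟩ := ha
  set S : ℕ → ℝ := fun n => ∑ j ∈ Finset.range n, a j with hSdef
  have Smono : Monotone S := fun m n h =>
    Finset.sum_le_sum_of_subset_of_nonneg (Finset.range_subset_range.2 h) (fun i _ _ => (hpos i).le)
  have Spos : ∀ n, 1 ≤ n → 0 < S n := by
    intro n hn
    calc (0:ℝ) < a 0 := hpos 0
    _ = S 1 := by simp [hSdef]
    _ ≤ S n := Smono hn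
  have Stend : Tendsto S atTop atTop := by
    refine tendsto_atTop_mono (fun n => ?_)
      (Tendsto.atTop_mul_const (hpos 0) tendsto_natCast_atTop_atTop)
    calc (n:ℝ) * a 0 = ∑ _j ∈ Finset.range n, a 0 := by
          rw [Finset.sum_const, nsmul_eq_mul, Finset.card_range]
    _ ≤ S n := Finset.sum_le_sum (fun i _ => hmono (Nat.zero_le i))
  have hstep : ∀ (k p : ℕ), ∃ m : ℕ, p + k + 2 < m ∧ vSeq a m ≤ (1/2)^k / ((k:ℝ)+1) ∧
      2^k * S (p + k) ≤ S m := by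
    intro k p
    have h1 : ∀ᶠ m in atTop, p + k + 2 < m := eventually_gt_atTop _
    have hε : (0:ℝ) < (1/2)^k / ((k:ℝ)+1) := by positivity
    have h2 : ∀ᶠ m in atTop, vSeq a m ≤ (1/2)^k / ((k:ℝ)+1) :=
      (hv0.eventually_lt_const hε).mono (fun m hm => hm.le)
    have h3 : ∀ᶠ m in atTop, 2^k * S (p + k) ≤ S m := Stend.eventually_ge_atTop _
    obtain ⟨m, hm1, hm2, hm3⟩ := (h1.and (h2.and h3)).exists
    exact ⟨m, hm1, hm2, hm3⟩
  choose f hf1 hf2 hf3 using hstep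
  set b : ℕ → ℕ := fun k => Nat.rec (f 0 0) (fun k p => f (k+1) p) k with hbdef
  have hbsucc : ∀ k, b (k+1) = f (k+1) (b k) := fun k => rfl
  have hbgap : ∀ k, b k + (k+1) + 2 < b (k+1) := by
    intro k; rw [hbsucc]; exact hf1 (k+1) (b k)
  have hb0gt : 2 < b 0 := by
    have := hf1 0 0; exact this
  have hbv : ∀ k, vSeq a (b k) ≤ (1/2)^k / ((k:ℝ)+1) := by
    intro k
    cases k with
    | zero => exact hf2 0 0
    | succ k => rw [hbsucc]; exact_mod_cast hf2 (k+1) (b k)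
  have hbS : ∀ k, 2^(k+1) * S (b k + (k+1)) ≤ S (b (k+1)) := by
    intro k; rw [hbsucc]; exact hf3 (k+1) (b k)
  have hbstrict : StrictMono b := strictMono_nat_of_lt_succ (fun n => by
    have := hbgap n; omega)
  have hbk3 : ∀ k, k + 3 ≤ b k := by
    intro k
    induction k with
    | zero => omega
    | succ k ih => have := hbgap k; omega
  have hb1 : ∀ k, 1 ≤ b k := fun k => by have := hbk3 k; omega
  have hend : StrictMono (fun k => b k + k) := strictMono_nat_of_lt_succ (fun n => by
    have := hbgap n
    show b n + n < b (n+1) + (n+1)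
    omega)
  set A : Set ℕ := ⋃ k, Set.Icc (b k) (b k + k) with hAdef
  have hmemA : ∀ n, n ∈ A ↔ ∃ k, b k ≤ n ∧ n ≤ b k + k := by
    intro n; simp [hAdef, Set.mem_iUnion, Set.mem_Icc]
  have hwnonneg : ∀ N, 0 ≤ wSum a A N :=
    fun N => Finset.sum_nonneg (fun j _ => Set.indicator_nonneg (fun i _ => (hpos i).le) j)
  refine ⟨A, ?_, ?_, ?_⟩
  · -- A is infinite
    exact Set.infinite_of_injective_forall_mem hbstrict.injective
      (fun k => (hmemA (b k)).2 ⟨k, le_refl _, Nat.le_add_right _ _⟩)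
  · -- upper Banach density is 1
    have hinner : ∀ N : ℕ, 1 ≤ N →
        Filter.limsup (fun k : ℕ => ∑ j ∈ Finset.Icc (k+1) (k+N),
          Set.indicator A (fun _ => (1:ℝ)) j) atTop = (N:ℝ) := by
      intro N hN
      set g := fun k : ℕ => ∑ j ∈ Finset.Icc (k+1) (k+N),
        Set.indicator A (fun _ => (1:ℝ)) j with hgdef
      have hub : ∀ k, g k ≤ (N:ℝ) := by
        intro k
        have hcard : (Finset.Icc (k+1) (k+N)).card = N := by rw [Nat.card_Icc]; omega
        calc g k ≤ ∑ _j ∈ Finset.Icc (k+1) (k+N), (1:ℝ) := by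
              apply Finset.sum_le_sum
              intro j _
              by_cases h : j ∈ A <;> simp [Set.indicator_apply, h]
        _ = (N:ℝ) := by rw [Finset.sum_const, hcard, nsmul_eq_mul, mul_one]
      have hlb0 : ∀ k, (0:ℝ) ≤ g k :=
        fun k => Finset.sum_nonneg (fun j _ => Set.indicator_nonneg (fun i _ => zero_le_one) j)
      have hfreq : ∃ᶠ k in atTop, (N:ℝ) ≤ g k := by
        rw [Filter.frequently_atTop]
        intro K₀
        set K := max K₀ N with hKdef
        have hb1K : 1 ≤ b K := hb1 K
        refine ⟨b K - 1, by have := hbk3 K; have : K₀ ≤ K := le_max_left _ _; omega, ?_⟩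
        have hNK : N ≤ K := le_max_right _ _
        have hone : ∀ j ∈ Finset.Icc (b K - 1 + 1) (b K - 1 + N),
            Set.indicator A (fun _ => (1:ℝ)) j = 1 := by
          intro j hj
          rw [Finset.mem_Icc] at hj
          have hjA : j ∈ A := (hmemA j).2 ⟨K, by omega, by omega⟩
          simp [Set.indicator_of_mem hjA]
        have hcard : (Finset.Icc (b K - 1 + 1) (b K - 1 + N)).card = N := by
          rw [Nat.card_Icc]; omega
        have : g (b K - 1) = (N:ℝ) := by
          rw [hgdef]
          simp only
          rw [Finset.sum_congr rfl hone, Finset.sum_const, hcard, nsmul_eq_mul, mul_one]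
        rw [this]
      apply le_antisymm
      · exact Filter.limsup_le_of_le (Filter.isCoboundedUnder_le_of_le atTop hlb0)
          (Filter.Eventually.of_forall hub)
      · exact Filter.le_limsup_of_frequently_le hfreq (Filter.isBoundedUnder_of ⟨(N:ℝ), hub⟩)
    have hev : (fun N : ℕ =>
        (Filter.limsup (fun k : ℕ => ∑ j ∈ Finset.Icc (k+1) (k+N),
          Set.indicator A (fun _ => (1:ℝ)) j) atTop) / (N:ℝ)) =ᶠ[atTop] (fun _ => (1:ℝ)) := by
      filter_upwards [eventually_ge_atTop 1] with N hN
      rw [hinner N hN, div_self (by exact_mod_cast Nat.one_le_iff_ne_zero.1 hN : (N:ℝ) ≠ 0)]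
    rw [upperBanachDens, Filter.limsup_congr hev, Filter.limsup_const]
  · -- upper a-density is 0
    have key : ∀ K₀ N : ℕ, b (K₀+1) ≤ N → N < b (K₀+2) →
        wSum a A N / S (N+1) ≤ 2 * (1/2)^(K₀+1) := by
      intro K₀ N hbN hNb
      set K := K₀ + 1 with hKdef
      set c := b K₀ + K with hcdef
      set M := min N (b K + K) with hMdef
      have hMN : M ≤ N := min_le_left _ _
      have hbKM : b K ≤ M := le_min hbN (Nat.le_add_right _ _)
      have hSN : 0 < S (N+1) := Spos _ (by omega)
      have hpt : ∀ j ∈ Finset.range (N+1), Set.indicator A a j ≤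
          (if j < c then a j else 0) + (if b K ≤ j ∧ j ≤ b K + K then a j else 0) := by
        intro j hj
        rw [Finset.mem_range] at hj
        have hnn1 : (0:ℝ) ≤ if j < c then a j else 0 := by
          split_ifs; exacts [(hpos j).le, le_refl 0]
        have hnn2 : (0:ℝ) ≤ if b K ≤ j ∧ j ≤ b K + K then a j else 0 := by
          split_ifs; exacts [(hpos j).le, le_refl 0]
        by_cases hjA : j ∈ A
        · rw [Set.indicator_of_mem hjA]
          obtain ⟨k, hk1, hk2⟩ := (hmemA j).1 hjA
          rcases lt_trichotomy k K with hlt | heq | hgt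
          · have hle : b k + k ≤ b K₀ + K₀ := hend.monotone (show k ≤ K₀ by omega)
            have e1 : (if j < c then a j else 0) = a j := if_pos (by omega)
            linarith
          · subst heq
            have e2 : (if b K ≤ j ∧ j ≤ b K + K then a j else 0) = a j := if_pos ⟨hk1, hk2⟩
            linarith
          · exfalso
            have : b (K+1) ≤ b k := hbstrict.monotone hgt
            have : b (K₀+2) ≤ b k := by
              have : K₀ + 2 = K + 1 := by omega
              rw [this]; assumption
            omega
        · rw [Set.indicator_of_notMem hjA]
          linarith
      have hsum : wSum a A N ≤ S c + ((K:ℝ)+1) * a M := by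
        have h1 : wSum a A N ≤ ∑ j ∈ Finset.range (N+1),
            ((if j < c then a j else 0) + (if b K ≤ j ∧ j ≤ b K + K then a j else 0)) :=
          Finset.sum_le_sum hpt
        rw [Finset.sum_add_distrib] at h1
        have h2 : ∑ j ∈ Finset.range (N+1), (if j < c then a j else 0) ≤ S c := by
          rw [← Finset.sum_filter]
          apply Finset.sum_le_sum_of_subset_of_nonneg
          · intro j hj
            rw [Finset.mem_filter] at hj
            exact Finset.mem_range.2 hj.2
          · intro i _ _; exact (hpos i).le
        have h3 : ∑ j ∈ Finset.range (N+1),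
            (if b K ≤ j ∧ j ≤ b K + K then a j else 0) ≤ ((K:ℝ)+1) * a M := by
          rw [← Finset.sum_filter]
          have hsub : (Finset.range (N+1)).filter (fun j => b K ≤ j ∧ j ≤ b K + K)
              ⊆ Finset.Icc (b K) M := by
            intro j hj
            rw [Finset.mem_filter, Finset.mem_range] at hj
            rw [Finset.mem_Icc]
            omega
          have hcard : ((Finset.Icc (b K) M).card : ℝ) ≤ (K:ℝ) + 1 := by
            have h : (Finset.Icc (b K) M).card ≤ K + 1 := by
              rw [Nat.card_Icc]; omega
            calc ((Finset.Icc (b K) M).card : ℝ) ≤ ((K+1 : ℕ) : ℝ) := by exact_mod_cast h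
            _ = (K:ℝ) + 1 := by push_cast; ring
          calc ∑ j ∈ (Finset.range (N+1)).filter (fun j => b K ≤ j ∧ j ≤ b K + K), a j
              ≤ ∑ j ∈ Finset.Icc (b K) M, a j :=
                Finset.sum_le_sum_of_subset_of_nonneg hsub (fun i _ _ => (hpos i).le)
          _ ≤ (Finset.Icc (b K) M).card • a M :=
                Finset.sum_le_card_nsmul _ _ _ (fun j hj => hmono (Finset.mem_Icc.1 hj).2)
          _ = ((Finset.Icc (b K) M).card : ℝ) * a M := nsmul_eq_mul _ _
          _ ≤ ((K:ℝ)+1) * a M := mul_le_mul_of_nonneg_right hcard (hpos M).le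
        calc wSum a A N ≤ _ := h1
        _ ≤ S c + ((K:ℝ)+1) * a M := add_le_add h2 h3
      have hfirst : S c ≤ (1/2)^K * S (N+1) := by
        have h := hbS K₀
        rw [← hKdef, ← hcdef] at h
        have h2 : S (b K) ≤ S (N+1) := Smono (by omega)
        rw [div_pow, one_pow, div_mul_eq_mul_div, one_mul,
          le_div_iff₀ (by positivity : (0:ℝ) < 2^K)]
        linarith [mul_comm (S c) ((2:ℝ)^K)]
      have h1M : 1 ≤ M := le_trans (hb1 K) hbKM
      have hSM : 0 < S M := Spos _ h1M
      have hvM : vSeq a M ≤ (1/2)^K / ((K:ℝ)+1) :=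
        le_trans (hvmono (b K) M (hb1 K) hbKM) (hbv K)
      have haM : a M ≤ ((1/2)^K / ((K:ℝ)+1)) * S (N+1) := by
        have heq : a M = vSeq a M * S M := by
          rw [vSeq, show (∑ j ∈ Finset.range M, a j) = S M from rfl,
            div_mul_cancel₀ _ (ne_of_gt hSM)]
        rw [heq]
        exact mul_le_mul hvM (Smono (by omega : M ≤ N+1)) hSM.le (by positivity)
      have hsecond : ((K:ℝ)+1) * a M ≤ (1/2)^K * S (N+1) := by
        have hK1 : (0:ℝ) < (K:ℝ)+1 := by positivity
        calc ((K:ℝ)+1) * a M ≤ ((K:ℝ)+1) * (((1/2)^K / ((K:ℝ)+1)) * S (N+1)) :=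
              mul_le_mul_of_nonneg_left haM hK1.le
        _ = (1/2)^K * S (N+1) := by field_simp
      rw [div_le_iff₀ hSN]
      calc wSum a A N ≤ S c + ((K:ℝ)+1) * a M := hsum
      _ ≤ (1/2)^K * S (N+1) + (1/2)^K * S (N+1) := add_le_add hfirst hsecond
      _ = 2 * (1/2)^K * S (N+1) := by ring
    have htend : Tendsto (fun N => wSum a A N / ∑ j ∈ Finset.range (N+1), a j)
        atTop (nhds 0) := by
      rw [Metric.tendsto_atTop]
      intro ε hε
      obtain ⟨n, hn⟩ : ∃ n : ℕ, ((1:ℝ)/2)^n < ε :=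
        exists_pow_lt_of_lt_one hε (by norm_num)
      refine ⟨b (n+1), fun N hN => ?_⟩
      have hratio_nonneg : 0 ≤ wSum a A N / S (N+1) :=
        div_nonneg (hwnonneg N) (Spos _ (by omega)).le
      rw [Real.dist_eq, sub_zero,
        abs_of_nonneg (show (0:ℝ) ≤ wSum a A N / ∑ j ∈ Finset.range (N+1), a j
          from hratio_nonneg)]
      -- find the block containing N
      have hn1N : n + 1 ≤ N := le_trans (by have := hbk3 (n+1); omega) hN
      set k' := Nat.findGreatest (fun k => b k ≤ N) N with hk'def
      have hk'ge : n + 1 ≤ k' := Nat.le_findGreatest (P := fun k => b k ≤ N) hn1N hN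
      have hk'le : k' ≤ N := Nat.findGreatest_le N
      have hk'P' : b k' ≤ N := Nat.findGreatest_spec (P := fun k => b k ≤ N) hn1N hN
      have hnext : N < b (k'+1) := by
        rcases Nat.lt_or_ge N (k'+1) with hlt | hge
        · have := hbk3 (k'+1); omega
        · have hng : ¬ b (k'+1) ≤ N :=
            Nat.findGreatest_is_greatest (P := fun k => b k ≤ N) (n := N) (by omega) hge
          omega
      obtain ⟨k, hk⟩ : ∃ k, k' = k + 1 := ⟨k' - 1, by omega⟩
      have hkey := key k N (by rw [← hk]; exact hk'P') (by
        have : k + 2 = k' + 1 := by omega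
        rw [this]; exact hnext)
      have hpow : ((1:ℝ)/2)^(k+1) ≤ (1/2)^(n+1) :=
        pow_le_pow_of_le_one (by norm_num) (by norm_num) (by omega)
      have hpow2 : ((1:ℝ)/2)^(n+1) ≤ (1/2)^n * (1/2) := by
        rw [pow_succ]
      calc wSum a A N / ∑ j ∈ Finset.range (N+1), a j
          = wSum a A N / S (N+1) := rfl
      _ ≤ 2 * (1/2)^(k+1) := hkey
      _ ≤ 2 * ((1/2)^n * (1/2)) := by nlinarith [hpow, hpow2]
      _ = (1/2)^n := by ring
      _ < ε := hn
    rw [upperDensWith]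
    exact htend.limsup_eq
end

section
/- Let T be a bounded operator on a separable infinite-dimensional Banach space X. Then T is U-frequently hypercyclic if and only if T is U-frequently hypercyclic with respect to each a in the class S; moreover UFHC(T) = ∩_{a∈S} UFHC_a(T). -/
open Filter Topology

private lemma gauss_sum (n : ℕ) : ∑ j ∈ Finset.range n, ((j:ℝ)+1) = n*(n+1)/2 := by
  induction n with
  | zero => simp
  | succ k ih => rw [Finset.sum_range_succ, ih]; push_cast; ring

private lemma abel_key (a w : ℕ → ℝ) (γ G : ℝ) (hmono : Monotone a) :
    ∀ N : ℕ, (∀ M : ℕ, M ≤ N + 1 → (∑ j ∈ Finset.range M, w j) - γ * M ≤ G) →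
      a N * ((∑ j ∈ Finset.range (N+1), w j) - γ * ((N:ℝ)+1)) - (a N - a 0) * G
        ≤ ∑ j ∈ Finset.range (N+1), (w j - γ) * a j := by
  intro N
  induction N with
  | zero =>
      intro _
      norm_num [Finset.sum_range_one]
      nlinarith [le_refl (1:ℝ)]
  | succ n ih =>
      intro hg
      have h1 := ih (fun M hM => hg M (by omega))
      have h2 : (∑ j ∈ Finset.range (n+1), w j) - γ * ((n:ℕ):ℝ) - γ ≤ G := by
        have := hg (n+1) (by omega)
        push_cast at this
        linarith
      have h3 := hmono (Nat.le_succ n)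
      rw [Finset.sum_range_succ (fun j => (w j - γ) * a j), Finset.sum_range_succ w]
      push_cast
      nlinarith [h1, h2, h3]

private lemma lemA (a : ℕ → ℝ) (hpos : ∀ n, 0 < a n) (hmono : Monotone a) (A : Set ℕ)
    (h : 0 < upperDens A) : 0 < upperDensWith a A := by
  classical
  set w : ℕ → ℝ := A.indicator (fun _ => (1:ℝ)) with hw
  have hw0 : ∀ j, 0 ≤ w j := fun j => Set.indicator_nonneg (fun _ _ => zero_le_one) j
  have hw1 : ∀ j, w j ≤ 1 := by
    intro j; by_cases hj : j ∈ A <;> simp [hw, Set.indicator_apply, hj]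
  have hind : ∀ j, Set.indicator A a j = w j * a j := by
    intro j; by_cases hj : j ∈ A <;> simp [hw, Set.indicator_apply, hj]
  have huD : upperDens A
      = Filter.limsup (fun N => (∑ j ∈ Finset.range (N+1), w j) / ((N:ℝ)+1)) atTop := rfl
  set c := upperDens A with hc
  have hSpos : ∀ N : ℕ, (0:ℝ) < ∑ j ∈ Finset.range (N+1), a j :=
    fun N => Finset.sum_pos (fun j _ => hpos j) Finset.nonempty_range_add_one
  have hDle : ∀ M : ℕ, (∑ j ∈ Finset.range M, w j) ≤ (M:ℝ) := by
    intro M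
    calc ∑ j ∈ Finset.range M, w j ≤ ∑ _j ∈ Finset.range M, (1:ℝ) :=
          Finset.sum_le_sum (fun j _ => hw1 j)
      _ = M := by simp
  have hD0 : ∀ M : ℕ, (0:ℝ) ≤ ∑ j ∈ Finset.range M, w j :=
    fun M => Finset.sum_nonneg (fun j _ => hw0 j)
  have hfreq : ∃ᶠ N in atTop, c/2 < (∑ j ∈ Finset.range (N+1), w j) / ((N:ℝ)+1) := by
    apply Filter.frequently_lt_of_lt_limsup
    · apply Filter.IsBoundedUnder.isCoboundedUnder_le
      apply Filter.isBoundedUnder_of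
      exact ⟨0, fun N => div_nonneg (hD0 (N+1)) (by positivity)⟩
    · rw [← huD]; exact half_lt_self h
  have key : ∃ᶠ n in atTop, c/4 ≤ wSum a A n / (∑ j ∈ Finset.range (n+1), a j) := by
    rw [Filter.frequently_atTop] at hfreq ⊢
    intro N₀
    obtain ⟨K, hK⟩ := exists_nat_ge (((N₀:ℝ)+1) * 4 / c)
    obtain ⟨Ns, hNsK, hNs⟩ := hfreq K
    set g : ℕ → ℝ := fun M => (∑ j ∈ Finset.range M, w j) - c/4 * M with hg
    obtain ⟨M₁, hM₁mem, hM₁max⟩ :=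
      Finset.exists_max_image (Finset.range (Ns+2)) g ⟨0, by simp⟩
    have hM₁le : M₁ ≤ Ns + 1 := by
      have := Finset.mem_range.mp hM₁mem; omega
    have hNs1 : (0:ℝ) < (Ns:ℝ)+1 := by positivity
    have hgNs : c/4 * ((Ns:ℝ)+1) ≤ g (Ns+1) := by
      rw [lt_div_iff₀ hNs1] at hNs
      simp only [hg]
      push_cast
      linarith
    have hgmax : ∀ M, M ≤ Ns+1 → g M ≤ g M₁ :=
      fun M hM => hM₁max M (Finset.mem_range.mpr (by omega))
    have hc4pos : (0:ℝ) < c/4 * ((Ns:ℝ)+1) := by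
      have : (0:ℝ) < c := h
      positivity
    have hGpos : 0 < g M₁ :=
      lt_of_lt_of_le (lt_of_lt_of_le hc4pos hgNs) (hgmax (Ns+1) le_rfl)
    have hM₁ne : M₁ ≠ 0 := by
      intro h0
      rw [h0] at hGpos
      simp [hg] at hGpos
    obtain ⟨n, rfl⟩ := Nat.exists_eq_succ_of_ne_zero hM₁ne
    have hGle : c/4 * ((Ns:ℝ)+1) ≤ g (n+1) := le_trans hgNs (hgmax _ le_rfl)
    -- n is large
    have hn_big : N₀ ≤ n := by
      have h1 : g (n+1) ≤ ((n:ℝ)+1) := by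
        have h2 := hDle (n+1)
        have h3 : (0:ℝ) ≤ c/4 * ((n+1:ℕ):ℝ) := by
          have : (0:ℝ) < c := h
          positivity
        push_cast at h2 h3 ⊢
        simp only [hg]
        push_cast
        linarith
      have h4 : ((N₀:ℝ))+1 ≤ c/4 * ((Ns:ℝ)+1) := by
        have hcpos : (0:ℝ) < c := h
        rw [div_le_iff₀ hcpos] at hK
        have h5 : (K:ℝ) ≤ (Ns:ℝ) := by exact_mod_cast hNsK
        nlinarith
      have : ((N₀:ℝ))+1 ≤ (n:ℝ)+1 := le_trans h4 (le_trans hGle h1)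
      exact_mod_cast (by linarith : (N₀:ℝ) ≤ (n:ℝ))
    refine ⟨n, hn_big, ?_⟩
    -- apply abel_key
    have habel := abel_key a w (c/4) (g (n+1)) hmono n
      (fun M hM => hgmax M (by omega))
    have hgn1 : (∑ j ∈ Finset.range (n+1), w j) - c/4 * ((n:ℝ)+1) = g (n+1) := by
      simp only [hg]; push_cast; ring
    rw [hgn1] at habel
    have hLHS : a 0 * g (n+1)
        ≤ a n * g (n+1) - (a n - a 0) * g (n+1) := by ring_nf; exact le_refl _
    have hsum : ∑ j ∈ Finset.range (n+1), (w j - c/4) * a j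
        = wSum a A n - c/4 * (∑ j ∈ Finset.range (n+1), a j) := by
      unfold wSum
      rw [Finset.mul_sum, ← Finset.sum_sub_distrib]
      refine Finset.sum_congr rfl (fun j _ => ?_)
      rw [hind j]; ring
    have hpos0 : 0 ≤ a 0 * g (n+1) := le_of_lt (mul_pos (hpos 0) hGpos)
    rw [le_div_iff₀ (hSpos n)]
    rw [hsum] at habel
    nlinarith [habel, hLHS, hpos0]
  have hbdd : IsBoundedUnder (· ≤ ·) atTop
      (fun N => wSum a A N / ∑ j ∈ Finset.range (N+1), a j) := by
    apply Filter.isBoundedUnder_of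
    refine ⟨1, fun N => ?_⟩
    rw [div_le_one (hSpos N)]
    unfold wSum
    exact Finset.sum_le_sum
      (fun j _ => Set.indicator_le_self' (fun x _ => (hpos x).le) j)
  have hfinal := Filter.le_limsup_of_frequently_le key hbdd
  have : upperDensWith a A
      = Filter.limsup (fun N => wSum a A N / ∑ j ∈ Finset.range (N+1), a j) atTop := rfl
  rw [this]
  have hcpos : (0:ℝ) < c := h
  linarith

private lemma lemB (A : Set ℕ) (h : 0 < upperDensWith (fun n : ℕ => (n:ℝ)+1) A) :
    0 < upperDens A := by
  classical
  set a : ℕ → ℝ := fun n : ℕ => (n:ℝ)+1 with ha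
  set w : ℕ → ℝ := A.indicator (fun _ => (1:ℝ)) with hw
  have hw0 : ∀ j, 0 ≤ w j := fun j => Set.indicator_nonneg (fun _ _ => zero_le_one) j
  have hw1 : ∀ j, w j ≤ 1 := by
    intro j; by_cases hj : j ∈ A <;> simp [hw, Set.indicator_apply, hj]
  have hgauss : ∀ N : ℕ, ∑ j ∈ Finset.range (N+1), a j = ((N:ℝ)+1)*((N:ℝ)+2)/2 := by
    intro N
    have := gauss_sum (N+1)
    simp only [ha]
    rw [this]; push_cast; ring
  have hSpos : ∀ N : ℕ, (0:ℝ) < ∑ j ∈ Finset.range (N+1), a j := by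
    intro N; rw [hgauss N]; positivity
  set δ := upperDensWith a A with hδ
  have hfreq : ∃ᶠ N in atTop, δ/2 < wSum a A N / (∑ j ∈ Finset.range (N+1), a j) := by
    apply Filter.frequently_lt_of_lt_limsup
    · apply Filter.IsBoundedUnder.isCoboundedUnder_le
      apply Filter.isBoundedUnder_of
      refine ⟨0, fun N => div_nonneg ?_ (hSpos N).le⟩
      exact Finset.sum_nonneg (fun j _ =>
        Set.indicator_nonneg (fun x _ => by positivity) j)
    · exact half_lt_self h
  have key : ∃ᶠ N in atTop,
      δ/4 ≤ (∑ j ∈ Finset.range (N+1), w j) / ((N:ℝ)+1) := by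
    refine hfreq.mono (fun N hN => ?_)
    have hNpos : (0:ℝ) < (N:ℝ)+1 := by positivity
    have hWle : wSum a A N ≤ ((N:ℝ)+1) * (∑ j ∈ Finset.range (N+1), w j) := by
      unfold wSum
      rw [Finset.mul_sum]
      refine Finset.sum_le_sum (fun j hj => ?_)
      have hjN : (j:ℝ) ≤ (N:ℝ) := by
        exact_mod_cast Nat.lt_succ_iff.mp (Finset.mem_range.mp hj)
      by_cases hjA : j ∈ A
      · simp only [hw, ha, Set.indicator_of_mem hjA]
        linarith
      · simp only [hw, Set.indicator_of_notMem hjA, mul_zero]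
        simp [Set.indicator_of_notMem hjA]
    rw [lt_div_iff₀ (hSpos N)] at hN
    rw [hgauss N] at hN
    rw [le_div_iff₀ hNpos]
    nlinarith [hN, hWle, h, hNpos]
  have hbdd : IsBoundedUnder (· ≤ ·) atTop
      (fun N : ℕ => (∑ j ∈ Finset.range (N+1), w j) / ((N:ℝ)+1)) := by
    apply Filter.isBoundedUnder_of
    refine ⟨1, fun N => ?_⟩
    rw [div_le_one (by positivity)]
    calc ∑ j ∈ Finset.range (N+1), w j ≤ ∑ _j ∈ Finset.range (N+1), (1:ℝ) :=
          Finset.sum_le_sum (fun j _ => hw1 j)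
      _ = (N:ℝ)+1 := by simp
  have hfinal := Filter.le_limsup_of_frequently_le key hbdd
  have hud : upperDens A
      = Filter.limsup (fun N : ℕ => (∑ j ∈ Finset.range (N+1), w j) / ((N:ℝ)+1)) atTop := rfl
  rw [hud]
  linarith

private lemma memS_id : memS (fun n : ℕ => (n:ℝ)+1) := by
  have hv : ∀ k : ℕ, 1 ≤ k → vSeq (fun n : ℕ => (n:ℝ)+1) k = 2/(k:ℝ) := by
    intro k hk
    have hk0 : (0:ℝ) < (k:ℝ) := by exact_mod_cast hk
    unfold vSeq
    rw [gauss_sum]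
    rw [div_eq_div_iff (by positivity) hk0.ne']
    ring
  refine ⟨fun n => by positivity, ?_, ?_, ?_, ?_⟩
  · intro m n hmn
    have : (m:ℝ) ≤ (n:ℝ) := by exact_mod_cast hmn
    simpa using by linarith
  · exact Filter.tendsto_atTop_add_const_right _ 1 tendsto_natCast_atTop_atTop
  · intro m n h1 hmn
    rw [hv m h1, hv n (le_trans h1 hmn)]
    have hm0 : (0:ℝ) < (m:ℝ) := by exact_mod_cast h1
    have hmn' : (m:ℝ) ≤ (n:ℝ) := by exact_mod_cast hmn
    gcongr
  · have heq : (fun k : ℕ => 2/(k:ℝ)) =ᶠ[atTop] vSeq (fun n : ℕ => (n:ℝ)+1) := by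
      filter_upwards [Filter.eventually_ge_atTop 1] with k hk
      rw [hv k hk]
    exact Filter.Tendsto.congr' heq (tendsto_const_div_atTop_nhds_zero_nat 2)

/-- `T` is `U`-frequently hypercyclic iff it is `U`-frequently hypercyclic with respect to
every `a ∈ S`; moreover `UFHC(T) = ⋂_{a ∈ S} UFHC_a(T)`. -/
theorem stmt_4 {X : Type*} [NormedAddCommGroup X] [NormedSpace ℂ X] [CompleteSpace X]
    [TopologicalSpace.SeparableSpace X] (hX : ¬FiniteDimensional ℂ X) (T : X →L[ℂ] X) :
    ((UFHCSet T).Nonempty ↔ ∀ a : ℕ → ℝ, memS a → (UFHCaSet a T).Nonempty) ∧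
      UFHCSet T = ⋂ a ∈ {a : ℕ → ℝ | memS a}, UFHCaSet a T := by
  have hA : ∀ (a : ℕ → ℝ), memS a → ∀ A : Set ℕ, 0 < upperDens A → 0 < upperDensWith a A :=
    fun a ha A h => lemA a ha.1 ha.2.1 A h
  constructor
  · constructor
    · rintro ⟨x, hx⟩ a ha
      exact ⟨x, fun U hU hne => hA a ha _ (hx U hU hne)⟩
    · intro h
      obtain ⟨x, hx⟩ := h _ memS_id
      exact ⟨x, fun U hU hne => lemB _ (hx U hU hne)⟩
  · ext x
    simp only [Set.mem_iInter, Set.mem_setOf_eq]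
    constructor
    · intro hx a ha
      exact fun U hU hne => hA a ha _ (hx U hU hne)
    · intro hx
      exact fun U hU hne => lemB _ (hx _ memS_id U hU hne)
end

section
/- If T is a reiteratively hypercyclic bounded operator on a separable infinite-dimensional Banach space X, then HC(T) = ∪_{a∈S} UFHC_a(T). -/
open Filter Topology

section Aux

lemma auxNontrivial {X : Type*} [NormedAddCommGroup X] [NormedSpace ℂ X]
    (hX : ¬FiniteDimensional ℂ X) : Nontrivial X := by
  by_contra h
  rw [not_nontrivial_iff_subsingleton] at h
  exact hX inferInstance

lemma auxRetInfinite {X : Type*} [NormedAddCommGroup X] [NormedSpace ℂ X]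
    (hX : ¬FiniteDimensional ℂ X) (T : X →L[ℂ] X) {x : X} (hx : x ∈ HCSet T)
    {W : Set X} (hW : IsOpen W) (hWne : W.Nonempty) : (retSet T x W).Infinite := by
  haveI := auxNontrivial hX
  intro hfin
  -- W is infinite
  obtain ⟨z, hz⟩ := hWne
  haveI := Module.punctured_nhds_neBot ℂ X z
  have hWinf : W.Infinite := infinite_of_mem_nhds z (hW.mem_nhds hz)
  -- finite image of orbit points
  set F : Set X := (fun n : ℕ => (T ^ n) x) '' (retSet T x W) with hF
  have hFfin : F.Finite := hfin.image _
  have hW' : (W \ F).Nonempty := (hWinf.diff hFfin).nonempty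
  have hopen : IsOpen (W \ F) := hW.sdiff hFfin.isClosed
  obtain ⟨w, ⟨n, rfl⟩, hmemW, hnotF⟩ := hx.exists_mem_open hopen hW'
  exact hnotF ⟨n, hmemW, rfl⟩

open Classical in
noncomputable def auxCnt (A : Set ℕ) (k N : ℕ) : ℕ :=
  ((Finset.Icc (k+1) (k+N)).filter (fun m => m ∈ A)).card

open Classical in
lemma auxSumInd (A : Set ℕ) (s : Finset ℕ) :
    ∑ j ∈ s, Set.indicator A (fun _ => (1:ℝ)) j = ((s.filter (fun m => m ∈ A)).card : ℝ) := by
  rw [Finset.card_eq_sum_ones, Nat.cast_sum, Finset.sum_filter]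
  simp [Set.indicator_apply]

open Classical in
lemma auxSumIndCnt (A : Set ℕ) (k N : ℕ) :
    ∑ j ∈ Finset.Icc (k+1) (k+N), Set.indicator A (fun _ => (1:ℝ)) j = (auxCnt A k N : ℝ) :=
  auxSumInd A _

open Classical in
lemma auxCntIcc (A : Set ℕ) (k N : ℕ) :
    auxCnt A k N = ((Finset.Icc 1 N).filter (fun j => k + j ∈ A)).card := by
  unfold auxCnt
  rw [show Finset.Icc (k+1) (k+N) = Finset.map (addLeftEmbedding k) (Finset.Icc 1 N) from
    (Finset.map_add_left_Icc 1 N k).symm, Finset.filter_map, Finset.card_map]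
  rfl

-- extraction of windows from positive upper Banach density
lemma auxBanach {A : Set ℕ} (h : 0 < upperBanachDens A) :
    ∃ δ : ℝ, 0 < δ ∧ ∀ C : ℕ, ∃ N, C ≤ N ∧ 1 ≤ N ∧ ∀ K : ℕ, ∃ k, K ≤ k ∧
      δ * N ≤ (auxCnt A k N : ℝ) := by
  classical
  set g : ℕ → ℝ := fun N =>
    Filter.limsup
      (fun k : ℕ => ∑ j ∈ Finset.Icc (k + 1) (k + N), Set.indicator A (fun _ => (1 : ℝ)) j)
      Filter.atTop with hg
  have hcnt_nonneg : ∀ N k : ℕ,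
      0 ≤ ∑ j ∈ Finset.Icc (k + 1) (k + N), Set.indicator A (fun _ => (1 : ℝ)) j := by
    intro N k
    exact Finset.sum_nonneg fun j _ => Set.indicator_nonneg (fun _ _ => zero_le_one) j
  have hbdd : ∀ N : ℕ, IsBoundedUnder (· ≤ ·) atTop
      (fun k : ℕ => ∑ j ∈ Finset.Icc (k + 1) (k + N), Set.indicator A (fun _ => (1 : ℝ)) j) := by
    intro N
    refine isBoundedUnder_of ⟨(N:ℝ), fun k => ?_⟩
    rw [auxSumIndCnt]
    have : auxCnt A k N ≤ N := by
      unfold auxCnt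
      calc ((Finset.Icc (k+1) (k+N)).filter (fun m => m ∈ A)).card
          ≤ (Finset.Icc (k+1) (k+N)).card := Finset.card_filter_le _ _
        _ = N := by rw [Nat.card_Icc]; omega
    exact_mod_cast this
  have hg_nonneg : ∀ N, 0 ≤ g N := fun N =>
    le_limsup_of_frequently_le (Frequently.of_forall fun k => hcnt_nonneg N k) (hbdd N)
  have hfreq : ∃ᶠ N in atTop, upperBanachDens A / 2 < g N / N := by
    apply frequently_lt_of_lt_limsup
    · exact IsBoundedUnder.isCoboundedUnder_le
        (isBoundedUnder_of ⟨0, fun N => div_nonneg (hg_nonneg N) (Nat.cast_nonneg N)⟩)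
    · exact half_lt_self h
  refine ⟨upperBanachDens A / 2, half_pos h, fun C => ?_⟩
  obtain ⟨N, hNC, hNlt⟩ := frequently_atTop.1 hfreq (max C 1)
  refine ⟨N, le_trans (le_max_left _ _) hNC, le_trans (le_max_right _ _) hNC, fun K => ?_⟩
  have hNpos : (0:ℝ) < N := by
    have : 1 ≤ N := le_trans (le_max_right _ _) hNC
    exact_mod_cast this
  have hlt' : upperBanachDens A / 2 * N < g N := by
    rwa [lt_div_iff₀ hNpos] at hNlt
  have hfreq2 : ∃ᶠ k in atTop, upperBanachDens A / 2 * N <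
      ∑ j ∈ Finset.Icc (k + 1) (k + N), Set.indicator A (fun _ => (1 : ℝ)) j := by
    apply frequently_lt_of_lt_limsup
    · exact IsBoundedUnder.isCoboundedUnder_le
        (isBoundedUnder_of ⟨0, fun k => hcnt_nonneg N k⟩)
    · exact hlt'
  obtain ⟨k, hkK, hk⟩ := frequently_atTop.1 hfreq2 K
  rw [auxSumIndCnt] at hk
  exact ⟨k, hkK, hk.le⟩

open Classical in
lemma auxTransfer {X : Type*} [NormedAddCommGroup X] [NormedSpace ℂ X]
    (hX : ¬FiniteDimensional ℂ X) (T : X →L[ℂ] X) (hT : (RHCSet T).Nonempty)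
    {x : X} (hx : x ∈ HCSet T) {U : Set X} (hU : IsOpen U) (hUne : U.Nonempty) :
    ∃ δ : ℝ, 0 < δ ∧ ∀ C : ℕ, ∃ N, C ≤ N ∧ 1 ≤ N ∧ ∀ K : ℕ, ∃ k, K ≤ k ∧
      δ * N ≤ (auxCnt (retSet T x U) k N : ℝ) := by
  obtain ⟨y, hy⟩ := hT
  obtain ⟨δ, hδ, hwin⟩ := auxBanach (hy U hU hUne)
  refine ⟨δ, hδ, fun C => ?_⟩
  obtain ⟨N, hNC, hN1, hk⟩ := hwin C
  refine ⟨N, hNC, hN1, fun K => ?_⟩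
  obtain ⟨k, -, hcnt⟩ := hk 0
  set J : Finset ℕ := (Finset.Icc 1 N).filter (fun j => k + j ∈ retSet T y U) with hJ
  have hJcard : δ * N ≤ (J.card : ℝ) := by rwa [auxCntIcc] at hcnt
  set W : Set X := ⋂ j ∈ J, (T ^ j) ⁻¹' U with hW
  have hWopen : IsOpen W := isOpen_biInter_finset fun j _ => hU.preimage (T ^ j).continuous
  have hyW : (T ^ k) y ∈ W := by
    rw [hW]
    refine Set.mem_iInter₂.2 fun j hj => ?_
    have hj' : (T ^ (k + j)) y ∈ U := (Finset.mem_filter.1 hj).2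
    have : (T ^ j) ((T ^ k) y) = (T ^ (k + j)) y := by
      rw [add_comm, pow_add]; rfl
    rw [Set.mem_preimage, this]; exact hj'
  have hinf := auxRetInfinite hX T hx hWopen ⟨_, hyW⟩
  obtain ⟨m, hmW, hKm⟩ := hinf.exists_gt K
  refine ⟨m, hKm.le, ?_⟩
  rw [auxCntIcc]
  refine le_trans hJcard ?_
  have hsub : J ⊆ (Finset.Icc 1 N).filter (fun j => m + j ∈ retSet T x U) := by
    intro j hj
    rw [Finset.mem_filter] at hj ⊢
    refine ⟨hj.1, ?_⟩
    have hmW' : (T ^ m) x ∈ W := hmW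
    have : (T ^ m) x ∈ (T ^ j) ⁻¹' U := by
      rw [hW] at hmW'
      exact Set.mem_iInter₂.1 hmW' j (Finset.mem_filter.2 hj)
    have heq : (T ^ j) ((T ^ m) x) = (T ^ (m + j)) x := by
      rw [add_comm, pow_add]; rfl
    rw [Set.mem_preimage] at this
    show (T ^ (m + j)) x ∈ U
    rwa [heq] at this
  exact_mod_cast Finset.card_le_card hsub

open Classical in
lemma auxSumIndF (A : Set ℕ) (f : ℕ → ℝ) (s : Finset ℕ) :
    ∑ j ∈ s, Set.indicator A f j = ∑ j ∈ s.filter (fun m => m ∈ A), f j := by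
  rw [Finset.sum_filter]
  exact Finset.sum_congr rfl fun j _ => by simp [Set.indicator_apply]

set_option maxHeartbeats 2000000 in
open Classical in
lemma auxConstruction (A : ℕ → Set ℕ)
    (H : ∀ i, ∃ δ : ℝ, 0 < δ ∧ ∀ C : ℕ, ∃ N, C ≤ N ∧ 1 ≤ N ∧ ∀ K : ℕ, ∃ k, K ≤ k ∧
      δ * N ≤ (auxCnt (A i) k N : ℝ)) :
    ∃ a : ℕ → ℝ, memS a ∧ ∀ i (B : Set ℕ), A i ⊆ B → 0 < upperDensWith a B := by
  choose δ hδ hH using H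
  choose Nf hNfC hNf1 hNfk using hH
  choose kf hkf hcnt using hNfk
  -- the stage recursion: stage j = (e j, τ j)
  let stage : ℕ → ℕ × ℕ := fun j => Nat.rec (0, 0)
    (fun j p =>
      (kf (Nat.unpair j).1 (max p.2 (j+2)) (p.1 + Nf (Nat.unpair j).1 (max p.2 (j+2)))
         + Nf (Nat.unpair j).1 (max p.2 (j+2)),
       Nf (Nat.unpair j).1 (max p.2 (j+2)))) j
  let e : ℕ → ℕ := fun j => (stage j).1
  let τ : ℕ → ℕ := fun j => (stage j).2
  let Ns : ℕ → ℕ := fun j => Nf (Nat.unpair j).1 (max (τ j) (j+2))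
  let ks : ℕ → ℕ := fun j => kf (Nat.unpair j).1 (max (τ j) (j+2)) (e j + Ns j)
  have he0 : e 0 = 0 := rfl
  have hτ0 : τ 0 = 0 := rfl
  have heS : ∀ j, e (j+1) = ks j + Ns j := fun j => rfl
  have hτS : ∀ j, τ (j+1) = Ns j := fun j => rfl
  have hNsτ : ∀ j, τ j ≤ Ns j := fun j => le_trans (le_max_left _ _) (hNfC _ _)
  have hNs2 : ∀ j, j + 2 ≤ Ns j := fun j => le_trans (le_max_right _ _) (hNfC _ _)
  have hNs1 : ∀ j, 1 ≤ Ns j := fun j => hNf1 _ _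
  have hks : ∀ j, e j + Ns j ≤ ks j := fun j => hkf _ _ _
  have hcnt' : ∀ j, δ (Nat.unpair j).1 * (Ns j : ℝ) ≤
      (auxCnt (A (Nat.unpair j).1) (ks j) (Ns j) : ℝ) := fun j => hcnt _ _ _
  have hemono : StrictMono e := by
    apply strictMono_nat_of_lt_succ
    intro j
    have h1 := hks j
    have h2 := hNs1 j
    rw [heS j]
    omega
  have hee : ∀ j, j ≤ e j := fun j => hemono.le_apply
  -- the slope sequence t
  let t : ℕ → ℕ := fun n => if n = 0 then 1 else
    (fun j => min (τ j + (n - e j)) (Ns j)) (Nat.findGreatest (fun j => e j < n) n)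
  have hloc : ∀ j n, e j < n → n ≤ e (j+1) → t n = min (τ j + (n - e j)) (Ns j) := by
    intro j n h1 h2
    have hn0 : n ≠ 0 := by omega
    have hjn : j ≤ n := le_trans (hee j) (le_of_lt h1)
    have hspec : e (Nat.findGreatest (fun j => e j < n) n) < n :=
      Nat.findGreatest_spec (P := fun i => e i < n) hjn h1
    have hle : j ≤ Nat.findGreatest (fun j => e j < n) n := Nat.le_findGreatest hjn h1
    have hge : Nat.findGreatest (fun j => e j < n) n ≤ j := by
      by_contra hcon
      push_neg at hcon
      have : e (j+1) ≤ e (Nat.findGreatest (fun j => e j < n) n) :=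
        hemono.monotone hcon
      omega
    have hj : Nat.findGreatest (fun j => e j < n) n = j := le_antisymm hge hle
    show (if n = 0 then 1 else _) = _
    rw [if_neg hn0, hj]
  have hstage_loc : ∀ n, 1 ≤ n → ∃ j, e j < n ∧ n ≤ e (j+1) := by
    intro n hn
    set j := Nat.findGreatest (fun j => e j < n) n with hjdef
    have hP : e j < n :=
      Nat.findGreatest_spec (P := fun i => e i < n) (Nat.zero_le n) (show e 0 < n by rw [he0]; omega)
    refine ⟨j, hP, ?_⟩
    by_contra hcon
    push_neg at hcon
    have hj1n : j + 1 ≤ n := by have := hee (j+1); omega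
    exact (Nat.findGreatest_is_greatest (lt_add_one j) hj1n) hcon
  have hwindow : ∀ j n, ks j < n → n ≤ e (j+1) → t n = Ns j := by
    intro j n h1 h2
    have he1 : e j < n := by have := hks j; have := hNs1 j; omega
    rw [hloc j n he1 h2]
    have : Ns j + 1 ≤ n - e j := by have := hks j; omega
    omega
  have ht_boundary : ∀ j, t (e (j+1)) = Ns j := fun j =>
    hwindow j _ (by rw [heS j]; have := hNs1 j; omega) le_rfl
  have ht0 : t 0 = 1 := rfl
  have ht1 : t 1 = 1 := by
    have h1 : e 0 < 1 := by omega
    have h2 : (1:ℕ) ≤ e 1 := hee 1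
    rw [hloc 0 1 h1 h2, he0, hτ0]
    have := hNs1 0
    omega
  have ht_pos : ∀ n, 1 ≤ t n := by
    intro n
    rcases Nat.eq_zero_or_pos n with h | h
    · rw [h, ht0]
    · obtain ⟨j, h1, h2⟩ := hstage_loc n h
      rw [hloc j n h1 h2]
      have := hNs1 j
      omega
  have ht_succ : ∀ n, 1 ≤ n → t n ≤ t (n+1) ∧ t (n+1) ≤ t n + 1 := by
    intro n hn
    obtain ⟨j, h1, h2⟩ := hstage_loc n hn
    rcases lt_or_eq_of_le h2 with hlt | heq
    · rw [hloc j n h1 h2, hloc j (n+1) (by omega) hlt]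
      omega
    · have hb : t n = Ns j := by rw [heq, ht_boundary j]
      have hlt2 : e (j+1) < e (j+1+1) := hemono (lt_add_one (j+1))
      have hnext : t (n+1) = min (τ (j+1) + ((n+1) - e (j+1))) (Ns (j+1)) :=
        hloc (j+1) (n+1) (by omega) (by omega)
      have hsub : (n+1) - e (j+1) = 1 := by omega
      rw [hb, hnext, hsub, hτS j]
      have := hNsτ (j+1)
      rw [hτS j] at this
      omega
  have ht_mono : Monotone t := by
    apply monotone_nat_of_le_succ
    intro n
    rcases Nat.eq_zero_or_pos n with h | h
    · rw [h, ht0, ht1]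
    · exact (ht_succ n h).1
  have ht_step : ∀ n, t (n+1) ≤ t n + 1 := by
    intro n
    rcases Nat.eq_zero_or_pos n with h | h
    · rw [h, ht0, ht1]; omega
    · exact (ht_succ n h).2
  have ht_tendsto : Tendsto t atTop atTop := by
    apply tendsto_atTop_atTop.2
    intro C
    refine ⟨e (C+1), fun n hn => ?_⟩
    have h1 : t (e (C+1)) = Ns C := ht_boundary C
    have h2 := hNs2 C
    have := ht_mono hn
    omega
  let S : ℕ → ℝ := fun n =>
    Nat.rec (motive := fun _ => ℝ) 1 (fun m Sm => Sm * (1 + 1 / (t (m+1) : ℝ))) n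
  have hS0 : S 0 = 1 := rfl
  have hSS : ∀ n, S (n+1) = S n * (1 + 1/(t (n+1) : ℝ)) := fun n => rfl
  have htcast : ∀ n, (1:ℝ) ≤ (t n : ℝ) := fun n => by exact_mod_cast ht_pos n
  have htposR : ∀ n, (0:ℝ) < (t n : ℝ) := fun n => lt_of_lt_of_le one_pos (htcast n)
  have hfac : ∀ n, (1:ℝ) ≤ 1 + 1/(t n : ℝ) := fun n => by
    have h2 : 0 ≤ 1/(t n:ℝ) := le_of_lt (one_div_pos.2 (htposR n))
    linarith
  have hSpos : ∀ n, 0 < S n := by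
    intro n
    induction n with
    | zero => rw [hS0]; norm_num
    | succ m ih => rw [hSS m]; nlinarith [hfac (m+1)]
  have hSmono : Monotone S := monotone_nat_of_le_succ fun n => by
    rw [hSS n]; nlinarith [hSpos n, hfac (n+1)]
  let a : ℕ → ℝ := fun n => Nat.casesOn n 1 (fun m => S m / (t (m+1) : ℝ))
  have ha0 : a 0 = 1 := rfl
  have haS : ∀ n, a (n+1) = S n / (t (n+1) : ℝ) := fun n => rfl
  have hapos : ∀ n, 0 < a n := by
    intro n
    cases n with
    | zero => rw [ha0]; norm_num
    | succ m => rw [haS m]; exact div_pos (hSpos m) (htposR (m+1))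
  have hsum : ∀ n, ∑ j ∈ Finset.range (n+1), a j = S n := by
    intro n
    induction n with
    | zero => rw [Finset.sum_range_one]; rfl
    | succ m ih =>
      rw [Finset.sum_range_succ, ih, haS m, hSS m]
      have htne : ((t (m+1):ℝ)) ≠ 0 := ne_of_gt (htposR (m+1))
      field_simp
  have hamono : Monotone a := by
    apply monotone_nat_of_le_succ
    intro n
    cases n with
    | zero =>
      rw [ha0, haS 0, hS0, ht1]
      norm_num
    | succ m =>
      rw [haS m, haS (m+1), hSS m]
      rw [div_le_div_iff₀ (htposR (m+1)) (htposR (m+2))]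
      have hstep : (t (m+2) : ℝ) ≤ (t (m+1) : ℝ) + 1 := by exact_mod_cast ht_step (m+1)
      have htne2 : ((t (m+1):ℝ)) ≠ 0 := ne_of_gt (htposR (m+1))
      have h0 : (1 + 1/(t (m+1):ℝ)) * (t (m+1):ℝ) = (t (m+1):ℝ) + 1 := by
        field_simp
      have h1 : S m * (1 + 1/(t (m+1):ℝ)) * (t (m+1):ℝ) = S m * ((t (m+1):ℝ) + 1) := by
        rw [mul_assoc, h0]
      rw [h1]
      nlinarith [hSpos m, htposR (m+1)]
  have hSwin : ∀ j m, m ≤ Ns j → S (ks j + m) = S (ks j) * (1 + 1/(Ns j : ℝ))^m := by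
    intro j m
    induction m with
    | zero => intro _; simp
    | succ m ih =>
      intro hm
      have hm' : m ≤ Ns j := by omega
      have hw : t (ks j + m + 1) = Ns j :=
        hwindow j _ (by omega) (by rw [heS j]; omega)
      rw [show ks j + (m+1) = (ks j + m) + 1 from rfl, hSS, ih hm', hw, pow_succ]
      ring
  have hNposR : ∀ j, (0:ℝ) < (Ns j : ℝ) := fun j => by
    have := hNs1 j; exact_mod_cast Nat.lt_of_lt_of_le Nat.zero_lt_one this
  have hexp : ∀ j, ((1:ℝ) + 1/(Ns j : ℝ))^(Ns j) ≤ 3 := by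
    intro j
    have hNpos := hNposR j
    have h1 : (1 + 1/(Ns j:ℝ)) ≤ Real.exp (1/(Ns j:ℝ)) := by
      have := Real.add_one_le_exp (1/(Ns j:ℝ)); linarith
    calc ((1:ℝ) + 1/(Ns j : ℝ))^(Ns j) ≤ (Real.exp (1/(Ns j:ℝ)))^(Ns j) :=
          pow_le_pow_left₀ (by positivity) h1 _
      _ = Real.exp ((Ns j : ℝ) * (1/(Ns j:ℝ))) := by rw [← Real.exp_nat_mul]
      _ = Real.exp 1 := by rw [mul_one_div, div_self (ne_of_gt hNpos)]
      _ ≤ 3 := le_trans Real.exp_one_lt_d9.le (by norm_num)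
  have hgrow : ∀ j, (3/2:ℝ) * a (e j) ≤ a (e (j+1)) := by
    intro j
    have hN2 : 2 ≤ Ns j := le_trans (by omega) (hNs2 j)
    have hE : e (j+1) = ks j + (Ns j - 1) + 1 := by rw [heS j]; omega
    have htE : t (ks j + (Ns j - 1) + 1) = Ns j :=
      hwindow j _ (by omega) (by rw [heS j]; omega)
    have haE : a (e (j+1)) = S (ks j + (Ns j - 1)) / (Ns j : ℝ) := by
      rw [hE, haS, htE]
    have hSw := hSwin j (Ns j - 1) (by omega)
    have hNpos := hNposR j
    have hcast : ((Ns j - 1 : ℕ) : ℝ) = (Ns j : ℝ) - 1 := by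
      rw [Nat.cast_sub (by omega)]; norm_num
    have hber : (3/2:ℝ) ≤ (1 + 1/(Ns j:ℝ))^(Ns j - 1) := by
      have h := one_add_mul_le_pow (a := 1/(Ns j:ℝ))
        (by nlinarith [one_div_pos.2 hNpos]) (Ns j - 1)
      have hN2R : (2:ℝ) ≤ (Ns j : ℝ) := by exact_mod_cast hN2
      have h' : 1 + ((Ns j:ℝ) - 1) * (1/(Ns j:ℝ)) ≤ (1 + 1/(Ns j:ℝ))^(Ns j - 1) := by
        rwa [hcast] at h
      have hN2R' : 1/(Ns j:ℝ) ≤ 1/2 := by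
        apply one_div_le_one_div_of_le (by norm_num)
        exact hN2R
      have h3 : ((Ns j:ℝ) - 1) * (1/(Ns j:ℝ)) = 1 - 1/(Ns j:ℝ) := by
        field_simp
      linarith
    have hk1 : a (ks j + 1) = S (ks j) / (Ns j : ℝ) := by
      rw [haS]
      rw [hwindow j (ks j + 1) (by omega) (by rw [heS j]; have := hNs1 j; omega)]
    have hmono1 : a (e j) ≤ a (ks j + 1) :=
      hamono (show e j ≤ ks j + 1 by have := hks j; have := hNs1 j; omega)
    have hfinal : (3/2:ℝ) * a (ks j + 1) ≤ a (e (j+1)) := by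
      rw [haE, hSw, hk1]
      rw [mul_comm (S (ks j)) _, mul_div_assoc]
      have hd : 0 ≤ S (ks j) / (Ns j:ℝ) := le_of_lt (div_pos (hSpos _) hNpos)
      nlinarith
    nlinarith [hapos (e j), hapos (ks j + 1)]
  have hpow32 : ∀ j, ((3:ℝ)/2)^j ≤ a (e j) := by
    intro j
    induction j with
    | zero => rw [pow_zero, he0, ha0]
    | succ m ih =>
      calc ((3:ℝ)/2)^(m+1) = (3/2) * (3/2)^m := by ring
        _ ≤ (3/2) * a (e m) := by nlinarith
        _ ≤ a (e (m+1)) := hgrow m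
  have ha_tend : Tendsto a atTop atTop := by
    apply tendsto_atTop_atTop.2
    intro C
    obtain ⟨j, hj⟩ := pow_unbounded_of_one_lt C (by norm_num : (1:ℝ) < 3/2)
    exact ⟨e j, fun n hn => le_trans (le_trans hj.le (hpow32 j)) (hamono hn)⟩
  have hvS : ∀ n, vSeq a (n+1) = 1/(t (n+1):ℝ) := by
    intro n
    show a (n+1) / ∑ j ∈ Finset.range (n+1), a j = _
    rw [hsum n, haS n]
    rw [div_right_comm, div_self (ne_of_gt (hSpos n))]

  have hv_mono : ∀ m n : ℕ, 1 ≤ m → m ≤ n → vSeq a n ≤ vSeq a m := by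
    intro m n hm hmn
    obtain ⟨m', rfl⟩ : ∃ m', m = m' + 1 := ⟨m - 1, by omega⟩
    obtain ⟨n', rfl⟩ : ∃ n', n = n' + 1 := ⟨n - 1, by omega⟩
    rw [hvS, hvS]
    apply one_div_le_one_div_of_le (htposR (m'+1))
    exact_mod_cast ht_mono hmn
  have hv_tend : Tendsto (vSeq a) atTop (nhds 0) := by
    have h1 : Tendsto (fun n => ((t n : ℝ))⁻¹) atTop (nhds 0) :=
      (tendsto_natCast_atTop_atTop.comp ht_tendsto).inv_tendsto_atTop
    apply h1.congr'
    filter_upwards [eventually_ge_atTop 1] with n hn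
    obtain ⟨n', rfl⟩ : ∃ n', n = n' + 1 := ⟨n - 1, by omega⟩
    rw [hvS, one_div]
  refine ⟨a, ⟨hapos, hamono, ha_tend, hv_mono, hv_tend⟩, ?_⟩
  intro i B hAB
  have hwin_low : ∀ j, ∀ n ∈ (Finset.Icc (ks j + 1) (ks j + Ns j)).filter (fun m => m ∈ B),
      S (ks j) / (Ns j : ℝ) ≤ a n := by
    intro j n hn
    rw [Finset.mem_filter, Finset.mem_Icc] at hn
    obtain ⟨⟨hn1, hn2⟩, _⟩ := hn
    obtain ⟨m, rfl⟩ : ∃ m, n = m + 1 := ⟨n - 1, by omega⟩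
    rw [haS m, hwindow j (m+1) (by omega) (by rw [heS j]; omega)]
    exact (div_le_div_iff_of_pos_right (hNposR j)).2 (hSmono (show ks j ≤ m by omega))
  have hcnt_mono : ∀ j, (auxCnt (A i) (ks j) (Ns j) : ℝ) ≤ (auxCnt B (ks j) (Ns j) : ℝ) := by
    intro j
    have : auxCnt (A i) (ks j) (Ns j) ≤ auxCnt B (ks j) (Ns j) := by
      unfold auxCnt
      apply Finset.card_le_card
      intro m hm
      rw [Finset.mem_filter] at hm ⊢
      exact ⟨hm.1, hAB hm.2⟩
    exact_mod_cast this
  have hkey : ∀ j, (Nat.unpair j).1 = i →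
      δ i / 3 ≤ wSum a B (e (j+1)) / ∑ x ∈ Finset.range (e (j+1) + 1), a x := by
    intro j hij
    rw [hsum (e (j+1))]
    have hNpos := hNposR j
    have hc1 : δ i * (Ns j:ℝ) ≤ (auxCnt B (ks j) (Ns j) : ℝ) := by
      refine le_trans ?_ (hcnt_mono j)
      rw [← hij]
      exact hcnt' j
    have hd : (0:ℝ) ≤ S (ks j) / (Ns j:ℝ) := le_of_lt (div_pos (hSpos _) hNpos)
    have hsum1 : (auxCnt B (ks j) (Ns j) : ℝ) * (S (ks j) / (Ns j:ℝ)) ≤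
        ∑ n ∈ (Finset.Icc (ks j + 1) (ks j + Ns j)).filter (fun m => m ∈ B), a n := by
      have hconst : ∑ _n ∈ (Finset.Icc (ks j + 1) (ks j + Ns j)).filter (fun m => m ∈ B),
          (S (ks j) / (Ns j:ℝ)) = (auxCnt B (ks j) (Ns j) : ℝ) * (S (ks j) / (Ns j:ℝ)) := by
        rw [Finset.sum_const, nsmul_eq_mul]
        rfl
      rw [← hconst]
      exact Finset.sum_le_sum (hwin_low j)
    have hsum2 : ∑ n ∈ (Finset.Icc (ks j + 1) (ks j + Ns j)).filter (fun m => m ∈ B), a n ≤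
        wSum a B (e (j+1)) := by
      unfold wSum
      rw [auxSumIndF B a (Finset.range (e (j+1) + 1))]
      apply Finset.sum_le_sum_of_subset_of_nonneg
      · intro n hn
        rw [Finset.mem_filter, Finset.mem_Icc] at hn
        rw [Finset.mem_filter, Finset.mem_range]
        refine ⟨?_, hn.2⟩
        rw [heS j]
        omega
      · intro n _ _
        exact (hapos n).le
    have hSE3 : S (e (j+1)) ≤ 3 * S (ks j) := by
      have h1 : S (e (j+1)) = S (ks j) * ((1:ℝ) + 1/(Ns j : ℝ))^(Ns j) := by
        rw [heS j]
        exact hSwin j (Ns j) le_rfl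
      rw [h1, mul_comm 3 (S (ks j))]
      exact mul_le_mul_of_nonneg_left (hexp j) (hSpos _).le
    have hnum : δ i * S (ks j) ≤ wSum a B (e (j+1)) := by
      have heq1 : δ i * S (ks j) = (δ i * (Ns j:ℝ)) * (S (ks j)/(Ns j:ℝ)) := by
        field_simp
      rw [heq1]
      exact le_trans (mul_le_mul_of_nonneg_right hc1 hd) (le_trans hsum1 hsum2)
    rw [le_div_iff₀ (hSpos (e (j+1)))]
    have hδi := hδ i
    calc δ i / 3 * S (e (j+1)) ≤ δ i / 3 * (3 * S (ks j)) := by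
          apply mul_le_mul_of_nonneg_left hSE3
          positivity
      _ = δ i * S (ks j) := by ring
      _ ≤ wSum a B (e (j+1)) := hnum
  have hfreq : ∃ᶠ E in atTop, δ i / 3 ≤ wSum a B E / ∑ x ∈ Finset.range (E+1), a x := by
    rw [frequently_atTop]
    intro K
    refine ⟨e (Nat.pair i K + 1), ?_, hkey (Nat.pair i K) (by rw [Nat.unpair_pair])⟩
    have h1 : K ≤ Nat.pair i K := Nat.right_le_pair i K
    have h2 := hee (Nat.pair i K + 1)
    omega
  have hbdd : IsBoundedUnder (· ≤ ·) atTop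
      (fun E => wSum a B E / ∑ x ∈ Finset.range (E+1), a x) := by
    refine isBoundedUnder_of ⟨1, fun E => ?_⟩
    rw [hsum E]
    apply div_le_one_of_le₀ _ (hSpos E).le
    rw [← hsum E]
    unfold wSum
    exact Finset.sum_le_sum fun n _ => Set.indicator_le_self' (fun m _ => (hapos m).le) n
  have hlim := le_limsup_of_frequently_le hfreq hbdd
  have hpos : (0:ℝ) < δ i / 3 := by have := hδ i; positivity
  exact lt_of_lt_of_le hpos hlim

end Aux

/-- If `T` is reiteratively hypercyclic then `HC(T) = ⋃_{a ∈ S} UFHC_a(T)`. -/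
theorem stmt_6 {X : Type*} [NormedAddCommGroup X] [NormedSpace ℂ X] [CompleteSpace X]
    [TopologicalSpace.SeparableSpace X] (hX : ¬FiniteDimensional ℂ X) (T : X →L[ℂ] X)
    (hT : (RHCSet T).Nonempty) :
    HCSet T = ⋃ a ∈ {a : ℕ → ℝ | memS a}, UFHCaSet a T := by
  haveI := auxNontrivial hX
  ext x
  constructor
  · intro hx
    haveI : SecondCountableTopology X :=
      UniformSpace.secondCountable_of_separable X
    obtain ⟨B, hBcount, hBnotriv, hBbasis⟩ := TopologicalSpace.exists_countable_basis X
    have hBne : B.Nonempty := by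
      rcases Set.eq_empty_or_nonempty B with h | h
      · exfalso
        have huniv := hBbasis.sUnion_eq
        rw [h, Set.sUnion_empty] at huniv
        obtain ⟨z, z', hz⟩ := exists_pair_ne X
        have : z ∈ (∅ : Set X) := by rw [huniv]; trivial
        exact this
      · exact h
    obtain ⟨u, hu⟩ := Set.Countable.exists_eq_range hBcount hBne
    have huo : ∀ i, IsOpen (u i) := fun i =>
      hBbasis.isOpen (by rw [hu]; exact Set.mem_range_self i)
    have hune : ∀ i, (u i).Nonempty := fun i => by
      rw [Set.nonempty_iff_ne_empty]
      intro h
      exact hBnotriv (by rw [← h, hu]; exact Set.mem_range_self i)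
    have H : ∀ i : ℕ, ∃ δ : ℝ, 0 < δ ∧ ∀ C : ℕ, ∃ N, C ≤ N ∧ 1 ≤ N ∧ ∀ K : ℕ, ∃ k, K ≤ k ∧
        δ * N ≤ (auxCnt (retSet T x (u i)) k N : ℝ) := fun i =>
      auxTransfer hX T hT hx (huo i) (hune i)
    obtain ⟨a, hmemS, hpos⟩ := auxConstruction (fun i => retSet T x (u i)) H
    refine Set.mem_iUnion₂.2 ⟨a, hmemS, ?_⟩
    intro U hU hUne
    obtain ⟨z, hz⟩ := hUne
    obtain ⟨v, hvB, hzv, hvU⟩ := hBbasis.exists_subset_of_mem_open hz hU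
    obtain ⟨i, hi⟩ : ∃ i, u i = v := by
      rw [hu] at hvB
      obtain ⟨i, hi⟩ := hvB
      exact ⟨i, hi⟩
    apply hpos i (retSet T x U)
    intro n hn
    have : (T ^ n) x ∈ u i := hn
    rw [hi] at this
    exact hvU this
  · intro hx
    obtain ⟨a, _, hxa⟩ := Set.mem_iUnion₂.1 hx
    show Dense (Set.range fun n : ℕ => (T ^ n) x)
    rw [dense_iff_inter_open]
    intro U hU hUne
    have h := hxa U hU hUne
    have hne : (retSet T x U).Nonempty := by
      by_contra h0
      rw [Set.not_nonempty_iff_eq_empty] at h0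
      rw [h0] at h
      have hzero : upperDensWith a (∅ : Set ℕ) = 0 := by
        unfold upperDensWith wSum
        have hz : ∀ N : ℕ, (∑ j ∈ Finset.range (N + 1), Set.indicator (∅ : Set ℕ) a j)
            / ∑ j ∈ Finset.range (N + 1), a j = 0 := by
          intro N
          simp
        simp only [hz]
        exact limsup_const 0
      rw [hzero] at h
      exact lt_irrefl 0 h
    obtain ⟨n, hn⟩ := hne
    exact ⟨(T ^ n) x, hn, ⟨n, rfl⟩⟩
end

section
/- Let A be an upper Furstenberg family, with decomposition A = ∪_{δ∈D} A_δ, satisfying: (1) for every δ' ∈ D there exists δ ∈ D such that for all k ≥ 0 and all A ∈ A_{δ'}, one has A − k ∈ A_δ; (2) for every A ∈ A there exists δ ∈ D such that {k ≥ 0 : A ∩ (A − k) ∈ A_δ} has bounded gaps. If a bounded operator T on a separable infinite-dimensional Banach space X is A-hypercyclic, then T × T is A-hypercyclic on X × X. -/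
open Filter Topology

section Aux

variable {X : Type*} [NormedAddCommGroup X] [NormedSpace ℂ X]

/-- `N(A,B) = {ν : T^ν(A) ∩ B ≠ ∅}`. -/
def NNset (T : X →L[ℂ] X) (A B : Set X) : Set ℕ := {ν : ℕ | ∃ u ∈ A, (T ^ ν) u ∈ B}

lemma pow_apply_add (T : X →L[ℂ] X) (a b : ℕ) (w : X) :
    (T ^ (a + b)) w = (T ^ a) ((T ^ b) w) := by
  rw [pow_add]; rfl

lemma syndetic_mono {K K' : Set ℕ} (h : Syndetic K) (hsub : K ⊆ K') : Syndetic K' := by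
  obtain ⟨m, hm⟩ := h
  exact ⟨m, fun n => by obtain ⟨k, hk1, hk2⟩ := hm n; exact ⟨k, hsub hk1, hk2⟩⟩

lemma syndetic_shift {K : Set ℕ} (s : ℕ) (h : Syndetic K) :
    Syndetic {n : ℕ | ∃ k ∈ K, n = k + s} := by
  obtain ⟨m, hm⟩ := h
  refine ⟨m + s, fun n => ?_⟩
  rcases le_total n s with hns | hsn
  · obtain ⟨k, hk1, hk2⟩ := hm 0
    simp only [Set.mem_Icc] at hk2
    exact ⟨k + s, ⟨k, hk1, rfl⟩, by simp only [Set.mem_Icc]; omega⟩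
  · obtain ⟨k, hk1, hk2⟩ := hm (n - s)
    simp only [Set.mem_Icc] at hk2
    exact ⟨k + s, ⟨k, hk1, rfl⟩, by simp only [Set.mem_Icc]; omega⟩

lemma exists_equicont (T : X →L[ℂ] X) {ε : ℝ} (hε : 0 < ε) (m : ℕ) :
    ∃ δ : ℝ, 0 < δ ∧ ∀ j ≤ m, ∀ w : X, ‖w‖ < δ → ‖(T ^ j) w‖ < ε := by
  set C : ℝ := ∑ j ∈ Finset.range (m + 1), ‖T ^ j‖ with hC
  have hC0 : 0 ≤ C := Finset.sum_nonneg fun j _ => norm_nonneg _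
  refine ⟨ε / (C + 1), by positivity, fun j hj w hw => ?_⟩
  have hjC : ‖T ^ j‖ ≤ C :=
    Finset.single_le_sum (fun i _ => norm_nonneg (T ^ i))
      (Finset.mem_range.2 (by omega))
  have h1 : ‖(T ^ j) w‖ ≤ C * ‖w‖ := by
    calc ‖(T ^ j) w‖ ≤ ‖T ^ j‖ * ‖w‖ := (T ^ j).le_opNorm w
    _ ≤ C * ‖w‖ := mul_le_mul_of_nonneg_right hjC (norm_nonneg w)
  have h2 : C * ‖w‖ ≤ C * (ε / (C + 1)) :=
    mul_le_mul_of_nonneg_left (le_of_lt hw) hC0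
  have h3 : C * (ε / (C + 1)) < ε := by
    rw [div_eq_inv_mul, ← mul_assoc]
    have : C * (C + 1)⁻¹ < 1 := by
      rw [mul_inv_lt_iff₀ (by linarith)]
      linarith
    nlinarith
  linarith

variable (T : X →L[ℂ] X)

/-- Three-open-set lemma: common time for `A → B`, `ball z η → 0`, `0 → ball z η`. -/
lemma three_open
    (hsyn : ∀ U V : Set X, IsOpen U → U.Nonempty → IsOpen V → V.Nonempty →
      Syndetic (NNset T U V))
    {A B : Set X} (hA : IsOpen A) (hAne : A.Nonempty) (hB : IsOpen B) (hBne : B.Nonempty)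
    (z : X) {η : ℝ} (hη : 0 < η) :
    ∃ ν ∈ NNset T A B,
      (∃ c ∈ Metric.ball z η, (T ^ ν) c ∈ Metric.ball (0 : X) η) ∧
      (∃ q ∈ Metric.ball (0 : X) η, (T ^ ν) q ∈ Metric.ball z η) := by
  obtain ⟨g, hg⟩ := hsyn A B hA hAne hB hBne
  obtain ⟨δ3, hδ3pos, hδ3⟩ := exists_equicont T hη g
  obtain ⟨g3, hg3⟩ := hsyn (Metric.ball (0 : X) δ3) (Metric.ball z η)
    Metric.isOpen_ball ⟨0, Metric.mem_ball_self hδ3pos⟩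
    Metric.isOpen_ball ⟨z, Metric.mem_ball_self hη⟩
  obtain ⟨δ, hδpos, hδ⟩ := exists_equicont T hη (g + g3)
  obtain ⟨g4, hg4⟩ := hsyn (Metric.ball z η) (Metric.ball (0 : X) δ)
    Metric.isOpen_ball ⟨z, Metric.mem_ball_self hη⟩
    Metric.isOpen_ball ⟨0, Metric.mem_ball_self hδpos⟩
  obtain ⟨s, hsmem, _⟩ := hg4 0
  obtain ⟨c0, hc0ball, hc0img⟩ := hsmem
  obtain ⟨n, hnS3, hnIcc⟩ := hg3 (s + g)
  simp only [Set.mem_Icc] at hnIcc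
  obtain ⟨w2, hw2ball, hw2img⟩ := hnS3
  obtain ⟨ν, hνAB, hνIcc⟩ := hg (n - g)
  simp only [Set.mem_Icc] at hνIcc
  have hsν : s ≤ ν := by omega
  have hνn : ν ≤ n := by omega
  refine ⟨ν, hνAB, ⟨c0, hc0ball, ?_⟩, ⟨(T ^ (n - ν)) w2, ?_, ?_⟩⟩
  · -- T^ν c0 small
    have h1 : (T ^ ν) c0 = (T ^ (ν - s)) ((T ^ s) c0) := by
      rw [← pow_apply_add, Nat.sub_add_cancel hsν]
    rw [mem_ball_zero_iff, h1]
    exact hδ (ν - s) (by omega) _ (mem_ball_zero_iff.1 hc0img)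
  · -- q := T^(n-ν) w2 small
    rw [mem_ball_zero_iff]
    exact hδ3 (n - ν) (by omega) _ (mem_ball_zero_iff.1 hw2ball)
  · -- T^ν q = T^n w2 ∈ ball z η
    have h1 : (T ^ ν) ((T ^ (n - ν)) w2) = (T ^ n) w2 := by
      rw [← pow_apply_add, Nat.add_sub_cancel' hνn]
    rw [h1]; exact hw2img

/-- Peris-type lemma : `N(A,B) ∩ N(C,C) ≠ ∅`. -/
lemma nn_self
    (hsyn : ∀ U V : Set X, IsOpen U → U.Nonempty → IsOpen V → V.Nonempty →
      Syndetic (NNset T U V))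
    {A B C : Set X} (hA : IsOpen A) (hAne : A.Nonempty) (hB : IsOpen B) (hBne : B.Nonempty)
    (hC : IsOpen C) (hCne : C.Nonempty) :
    ∃ ν, ν ∈ NNset T A B ∧ ν ∈ NNset T C C := by
  obtain ⟨z, hzC⟩ := hCne
  obtain ⟨ρ, hρ, hball⟩ := Metric.isOpen_iff.1 hC z hzC
  have hη : (0 : ℝ) < ρ / 3 := by linarith
  obtain ⟨ν, hνAB, ⟨c, hc, hcim⟩, ⟨q, hq, hqim⟩⟩ :=
    three_open T hsyn hA hAne hB hBne z hη
  refine ⟨ν, hνAB, ⟨c + q, ?_, ?_⟩⟩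
  · apply hball
    rw [mem_ball_iff_norm]
    have he : c + q - z = (c - z) + q := by abel
    rw [he]
    have h1 : ‖c - z‖ < ρ / 3 := mem_ball_iff_norm.1 hc
    have h2 : ‖q‖ < ρ / 3 := mem_ball_zero_iff.1 hq
    calc ‖(c - z) + q‖ ≤ ‖c - z‖ + ‖q‖ := norm_add_le _ _
    _ < ρ := by linarith
  · apply hball
    rw [mem_ball_iff_norm, map_add]
    have he : (T ^ ν) c + (T ^ ν) q - z = ((T ^ ν) q - z) + (T ^ ν) c := by abel
    rw [he]
    have h1 : ‖(T ^ ν) q - z‖ < ρ / 3 := mem_ball_iff_norm.1 hqim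
    have h2 : ‖(T ^ ν) c‖ < ρ / 3 := mem_ball_zero_iff.1 hcim
    calc ‖((T ^ ν) q - z) + (T ^ ν) c‖ ≤ ‖(T ^ ν) q - z‖ + ‖(T ^ ν) c‖ := norm_add_le _ _
    _ < ρ := by linarith

/-- Weak mixing. -/
lemma weak_mixing
    (hsyn : ∀ U V : Set X, IsOpen U → U.Nonempty → IsOpen V → V.Nonempty →
      Syndetic (NNset T U V))
    (hdr : ∀ (s : ℕ) (V : Set X), IsOpen V → V.Nonempty → ∃ u : X, (T ^ s) u ∈ V)
    {U1 V1 U2 V2 : Set X} (hU1 : IsOpen U1) (hU1n : U1.Nonempty)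
    (hV1 : IsOpen V1) (hV1n : V1.Nonempty) (hU2 : IsOpen U2) (hU2n : U2.Nonempty)
    (hV2 : IsOpen V2) (hV2n : V2.Nonempty) :
    ∃ ν, ν ∈ NNset T U1 V1 ∧ ν ∈ NNset T U2 V2 := by
  obtain ⟨g, hg⟩ := hsyn U2 V2 hU2 hU2n hV2 hV2n
  obtain ⟨s, hsNN, _⟩ := hg 0
  obtain ⟨ua, huaU2, huaV2⟩ := hsNN
  set W : Set X := U2 ∩ (T ^ s) ⁻¹' V2 with hW
  have hWo : IsOpen W := hU2.inter ((T ^ s).continuous.isOpen_preimage V2 hV2)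
  have hWne : W.Nonempty := ⟨ua, huaU2, huaV2⟩
  set B' : Set X := (T ^ s) ⁻¹' V1 with hB'
  have hB'o : IsOpen B' := (T ^ s).continuous.isOpen_preimage V1 hV1
  have hB'ne : B'.Nonempty := by
    obtain ⟨u, hu⟩ := hdr s V1 hV1 hV1n
    exact ⟨u, hu⟩
  obtain ⟨ν, hν1, hν2⟩ := nn_self T hsyn hU1 hU1n hB'o hB'ne hWo hWne
  obtain ⟨u, huU1, huim⟩ := hν1
  obtain ⟨w, hwW, hwim⟩ := hν2
  refine ⟨ν + s, ⟨u, huU1, ?_⟩, ⟨w, hwW.1, ?_⟩⟩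
  · rw [show ν + s = s + ν by omega, pow_apply_add]
    exact huim
  · rw [show ν + s = s + ν by omega, pow_apply_add]
    exact hwim.2

/-- Thickness of the return sets `N(U,V)`. -/
lemma nn_thick
    (hsyn : ∀ U V : Set X, IsOpen U → U.Nonempty → IsOpen V → V.Nonempty →
      Syndetic (NNset T U V))
    (hdr : ∀ (s : ℕ) (V : Set X), IsOpen V → V.Nonempty → ∃ u : X, (T ^ s) u ∈ V)
    {U V : Set X} (hU : IsOpen U) (hUne : U.Nonempty) (hV : IsOpen V) (hVne : V.Nonempty)
    (L : ℕ) :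
    ∃ ν, ∀ j ≤ L, ∃ u ∈ U, (T ^ (ν + j)) u ∈ V := by
  have hF1 : ∀ U1 V1 U2 V2 : Set X, IsOpen U1 → U1.Nonempty → IsOpen V1 → V1.Nonempty →
      IsOpen U2 → U2.Nonempty → IsOpen V2 → V2.Nonempty →
      ∃ U3 V3 : Set X, IsOpen U3 ∧ U3.Nonempty ∧ IsOpen V3 ∧ V3.Nonempty ∧
        ∀ m ∈ NNset T U3 V3, m ∈ NNset T U1 V1 ∧ m ∈ NNset T U2 V2 := by
    intro U1 V1 U2 V2 hU1 hU1n hV1 hV1n hU2 hU2n hV2 hV2n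
    obtain ⟨n, hn1, hn2⟩ := weak_mixing T hsyn hdr hU1 hU1n hU2 hU2n hV1 hV1n hV2 hV2n
    obtain ⟨u, huU1, huU2⟩ := hn1
    obtain ⟨v, hvV1, hvV2⟩ := hn2
    refine ⟨U1 ∩ (T ^ n) ⁻¹' U2, V1 ∩ (T ^ n) ⁻¹' V2,
      hU1.inter ((T ^ n).continuous.isOpen_preimage U2 hU2), ⟨u, huU1, huU2⟩,
      hV1.inter ((T ^ n).continuous.isOpen_preimage V2 hV2), ⟨v, hvV1, hvV2⟩, ?_⟩
    rintro m ⟨w, ⟨hw1, hw2⟩, hT1, hT2⟩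
    refine ⟨⟨w, hw1, hT1⟩, ⟨(T ^ n) w, hw2, ?_⟩⟩
    rw [← pow_apply_add, show m + n = n + m by omega, pow_apply_add]
    exact hT2
  have hFn : ∀ (L' : ℕ) (Vf : ℕ → Set X), (∀ j, IsOpen (Vf j)) → (∀ j, (Vf j).Nonempty) →
      ∃ U' V' : Set X, IsOpen U' ∧ U'.Nonempty ∧ IsOpen V' ∧ V'.Nonempty ∧
        ∀ m ∈ NNset T U' V', ∀ j ≤ L', m ∈ NNset T U (Vf j) := by
    intro L'
    induction L' with
    | zero =>
      intro Vf hVo hVn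
      refine ⟨U, Vf 0, hU, hUne, hVo 0, hVn 0, fun m hm j hj => ?_⟩
      interval_cases j
      exact hm
    | succ L' IH =>
      intro Vf hVo hVn
      obtain ⟨U', V', h1, h2, h3, h4, hprop⟩ := IH Vf hVo hVn
      obtain ⟨U3, V3, k1, k2, k3, k4, kprop⟩ :=
        hF1 U' V' U (Vf (L' + 1)) h1 h2 h3 h4 hU hUne (hVo _) (hVn _)
      refine ⟨U3, V3, k1, k2, k3, k4, fun m hm j hj => ?_⟩
      rcases Nat.lt_or_ge j (L' + 1) with h | h
      · exact hprop m (kprop m hm).1 j (by omega)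
      · have : j = L' + 1 := by omega
        rw [this]
        exact (kprop m hm).2
  have hVf : ∀ j : ℕ, IsOpen ((T ^ j) ⁻¹' V) :=
    fun j => (T ^ j).continuous.isOpen_preimage V hV
  have hVfn : ∀ j : ℕ, ((T ^ j) ⁻¹' V).Nonempty := by
    intro j
    obtain ⟨u, hu⟩ := hdr j V hV hVne
    exact ⟨u, hu⟩
  obtain ⟨U', V', h1, h2, h3, h4, hprop⟩ := hFn L (fun j => (T ^ j) ⁻¹' V) hVf hVfn
  obtain ⟨g, hg⟩ := hsyn U' V' h1 h2 h3 h4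
  obtain ⟨ν, hν, _⟩ := hg 0
  refine ⟨ν, fun j hj => ?_⟩
  obtain ⟨u, hu, him⟩ := hprop ν hν j hj
  exact ⟨u, hu, by rw [show ν + j = j + ν by omega, pow_apply_add]; exact him⟩

lemma prod_pow_apply (n : ℕ) (a b : X) :
    ((T.prodMap T) ^ n) (a, b) = ((T ^ n) a, (T ^ n) b) := by
  induction n generalizing a b with
  | zero => simp
  | succ n IH =>
    rw [pow_succ, pow_succ]
    simp only [ContinuousLinearMap.mul_apply]
    have h : (T.prodMap T) (a, b) = (T a, T b) := rfl
    rw [h, IH (T a) (T b)]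

end Aux


/-- If `𝒜 = ⋃_δ 𝒜_δ` is an upper Furstenberg family satisfying the two shift/syndeticity
conditions, and `T` is `𝒜`-hypercyclic, then `T × T` is `𝒜`-hypercyclic. -/
theorem stmt_8 {D : Type*} {M : Type*} [Countable M]
    (fam : D → M → Set (Set ℕ)) (Adelta : D → Set (Set ℕ)) (𝒜 : Set (Set ℕ))
    (hAdelta : ∀ δ : D, Adelta δ = ⋂ μ : M, fam δ μ)
    (h𝒜 : 𝒜 = ⋃ δ : D, Adelta δ)
    (hne : 𝒜.Nonempty) (hempty : ∅ ∉ 𝒜)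
    (hup : ∀ A B : Set ℕ, A ∈ 𝒜 → A ⊆ B → B ∈ 𝒜)
    (hi : ∀ (δ : D) (μ : M), ∀ A ∈ fam δ μ, ∃ F : Finset ℕ,
      ∀ B : Set ℕ, A ∩ ↑F ⊆ B → B ∈ fam δ μ)
    (hii : ∀ A ∈ 𝒜, ∃ δ : D, ∀ n : ℕ, shiftSet A n ∈ Adelta δ)
    (h1 : ∀ δ' : D, ∃ δ : D, ∀ k : ℕ, ∀ A ∈ Adelta δ', shiftSet A k ∈ Adelta δ)
    (h2 : ∀ A ∈ 𝒜, ∃ δ : D, Syndetic {k : ℕ | A ∩ shiftSet A k ∈ Adelta δ})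
    {X : Type*} [NormedAddCommGroup X] [NormedSpace ℂ X] [CompleteSpace X]
    [TopologicalSpace.SeparableSpace X] (hX : ¬FiniteDimensional ℂ X)
    (T : X →L[ℂ] X) (hT : AHC 𝒜 T) :
    AHC 𝒜 (T.prodMap T) := by
  classical
  obtain ⟨x, hx⟩ := hT
  have hAsub : ∀ δ : D, Adelta δ ⊆ 𝒜 := fun δ A hA => by
    rw [h𝒜]; exact Set.mem_iUnion.2 ⟨δ, hA⟩
  have hAne' : ∀ A ∈ 𝒜, A.Nonempty := by
    intro A hA
    rcases Set.eq_empty_or_nonempty A with h | h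
    · exact absurd (h ▸ hA) hempty
    · exact h
  have hAdup : ∀ (δ : D) (A B : Set ℕ), A ∈ Adelta δ → A ⊆ B → B ∈ Adelta δ := by
    intro δ A B hA hAB
    rw [hAdelta] at hA ⊢
    refine Set.mem_iInter.2 fun μ => ?_
    obtain ⟨F, hF⟩ := hi δ μ A (Set.mem_iInter.1 hA μ)
    exact hF B fun n hn => hAB hn.1
  have horb : ∀ W : Set X, IsOpen W → W.Nonempty → ∀ p : ℕ, ∃ m : ℕ, (T ^ (p + m)) x ∈ W := by
    intro W hW hWne p
    obtain ⟨δ, hδ⟩ := hii _ (hx W hW hWne)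
    obtain ⟨m, hm⟩ := hAne' _ (hAsub δ (hδ p))
    exact ⟨m, by rw [add_comm]; exact hm⟩
  have hdr : ∀ (s : ℕ) (V : Set X), IsOpen V → V.Nonempty → ∃ u : X, (T ^ s) u ∈ V := by
    intro s V hV hVne
    obtain ⟨m, hm⟩ := horb V hV hVne s
    exact ⟨(T ^ m) x, by rw [← pow_apply_add]; exact hm⟩
  have hKEY : ∀ U V : Set X, IsOpen U → U.Nonempty → IsOpen V → V.Nonempty →
      ∃ (δ0 : D) (R : Set ℕ), Syndetic R ∧
        ∀ r ∈ R, (retSet T x U ∩ shiftSet (retSet T x V) r) ∈ Adelta δ0 := by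
    intro U V hU hUne hV hVne
    obtain ⟨p, hp⟩ := horb U hU hUne 0
    rw [zero_add] at hp
    obtain ⟨s, hs⟩ := horb V hV hVne p
    have hU0o : IsOpen (U ∩ (T ^ s) ⁻¹' V) :=
      hU.inter ((T ^ s).continuous.isOpen_preimage V hV)
    have hU0ne : (U ∩ (T ^ s) ⁻¹' V).Nonempty := by
      refine ⟨(T ^ p) x, hp, ?_⟩
      simp only [Set.mem_preimage]
      rw [← pow_apply_add, add_comm s p]
      exact hs
    obtain ⟨δ0, hK⟩ := h2 _ (hx _ hU0o hU0ne)
    refine ⟨δ0, {n : ℕ | ∃ k ∈ {k : ℕ | retSet T x (U ∩ (T ^ s) ⁻¹' V) ∩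
        shiftSet (retSet T x (U ∩ (T ^ s) ⁻¹' V)) k ∈ Adelta δ0}, n = k + s},
      syndetic_shift s hK, ?_⟩
    rintro r ⟨k, hk, rfl⟩
    refine hAdup δ0 _ _ hk ?_
    rintro n ⟨hn1, hn2⟩
    constructor
    · exact hn1.1
    · show (T ^ (n + (k + s))) x ∈ V
      rw [show n + (k + s) = s + (n + k) by omega, pow_apply_add]
      exact hn2.2
  have hsyn : ∀ U V : Set X, IsOpen U → U.Nonempty → IsOpen V → V.Nonempty →
      Syndetic (NNset T U V) := by
    intro U V hU hUne hV hVne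
    obtain ⟨δ0, R, hRsyn, hR⟩ := hKEY U V hU hUne hV hVne
    refine syndetic_mono hRsyn ?_
    intro r hr
    obtain ⟨n, hn1, hn2⟩ := hAne' _ (hAsub δ0 (hR r hr))
    exact ⟨(T ^ n) x, hn1, by rw [← pow_apply_add, add_comm r n]; exact hn2⟩
  have hDP : ∀ U V : Set X, IsOpen U → U.Nonempty → IsOpen V → V.Nonempty →
      ∃ δ1 : D, ∀ O1 O2 : Set X, IsOpen O1 → O1.Nonempty → IsOpen O2 → O2.Nonempty →
        ∃ z : X × X, z.1 ∈ O1 ∧ z.2 ∈ O2 ∧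
          retSet (T.prodMap T) z (U ×ˢ V) ∈ Adelta δ1 := by
    intro U V hU hUne hV hVne
    obtain ⟨δ0, R, ⟨mR, hmR⟩, hR⟩ := hKEY U V hU hUne hV hVne
    obtain ⟨δ1, hδ1⟩ := h1 δ0
    refine ⟨δ1, ?_⟩
    intro O1 O2 hO1 hO1ne hO2 hO2ne
    obtain ⟨ν, hν⟩ := nn_thick T hsyn hdr hO1 hO1ne hO2 hO2ne mR
    obtain ⟨r, hrR, hrIcc⟩ := hmR ν
    simp only [Set.mem_Icc] at hrIcc
    obtain ⟨u, huO1, hur⟩ := hν (r - ν) (by omega)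
    rw [show ν + (r - ν) = r by omega] at hur
    have hO1'o : IsOpen (O1 ∩ (T ^ r) ⁻¹' O2) :=
      hO1.inter ((T ^ r).continuous.isOpen_preimage O2 hO2)
    obtain ⟨p, hpp⟩ := horb _ hO1'o ⟨u, huO1, hur⟩ 0
    rw [zero_add] at hpp
    refine ⟨((T ^ p) x, (T ^ (p + r)) x), hpp.1, ?_, ?_⟩
    · show (T ^ (p + r)) x ∈ O2
      rw [show p + r = r + p by omega, pow_apply_add]
      exact hpp.2
    · have heq : retSet (T.prodMap T) ((T ^ p) x, (T ^ (p + r)) x) (U ×ˢ V)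
          = shiftSet (retSet T x U ∩ shiftSet (retSet T x V) r) p := by
        ext n
        show ((T.prodMap T) ^ n) ((T ^ p) x, (T ^ (p + r)) x) ∈ U ×ˢ V ↔ _
        rw [prod_pow_apply]
        simp only [shiftSet, retSet, Set.mem_setOf_eq, Set.mem_inter_iff, Set.mem_prod]
        rw [← pow_apply_add, ← pow_apply_add, ← add_assoc]
      rw [heq]
      exact hδ1 p _ (hR r hrR)
  -- Baire category argument on X × X
  haveI : SecondCountableTopology X :=
    UniformSpace.secondCountable_of_separable X
  obtain ⟨b, hbc, hbne, hb⟩ := TopologicalSpace.exists_countable_basis X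
  haveI := hbc.to_subtype
  have hBopen : ∀ B : ↥b, IsOpen (B : Set X) := fun B => hb.isOpen B.2
  have hBnon : ∀ B : ↥b, (B : Set X).Nonempty := fun B =>
    Set.nonempty_iff_ne_empty.2 fun h => hbne (h ▸ B.2)
  have hDP' : ∀ B1 B2 : ↥b, ∃ δ1 : D,
      ∀ O1 O2 : Set X, IsOpen O1 → O1.Nonempty → IsOpen O2 → O2.Nonempty →
        ∃ z : X × X, z.1 ∈ O1 ∧ z.2 ∈ O2 ∧
          retSet (T.prodMap T) z ((B1 : Set X) ×ˢ (B2 : Set X)) ∈ Adelta δ1 :=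
    fun B1 B2 => hDP B1 B2 (hBopen B1) (hBnon B1) (hBopen B2) (hBnon B2)
  choose δf hδf using hDP'
  set Gset : ↥b × ↥b × M → Set (X × X) := fun i =>
    interior {w : X × X |
      retSet (T.prodMap T) w ((i.1 : Set X) ×ˢ (i.2.1 : Set X)) ∈ fam (δf i.1 i.2.1) i.2.2}
    with hGset
  have hGopen : ∀ i, IsOpen (Gset i) := fun i => isOpen_interior
  have hGdense : ∀ i, Dense (Gset i) := by
    intro i
    rw [dense_iff_inter_open]
    intro Ω hΩ hΩne
    obtain ⟨⟨a, c⟩, hac⟩ := hΩne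
    obtain ⟨O1, O2, hO1, hO2, haO1, hcO2, hsubΩ⟩ := isOpen_prod_iff.1 hΩ a c hac
    obtain ⟨z, hz1, hz2, hzret⟩ := hδf i.1 i.2.1 O1 O2 hO1 ⟨a, haO1⟩ hO2 ⟨c, hcO2⟩
    have hzfam : retSet (T.prodMap T) z ((i.1 : Set X) ×ˢ (i.2.1 : Set X))
        ∈ fam (δf i.1 i.2.1) i.2.2 := by
      rw [hAdelta] at hzret
      exact Set.mem_iInter.1 hzret i.2.2
    obtain ⟨F, hF⟩ := hi _ i.2.2 _ hzfam
    have hfin : (retSet (T.prodMap T) z ((i.1 : Set X) ×ˢ (i.2.1 : Set X)) ∩ ↑F).Finite :=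
      Set.Finite.subset F.finite_toSet Set.inter_subset_right
    have hΘopen : IsOpen (⋂ n ∈ retSet (T.prodMap T) z ((i.1 : Set X) ×ˢ (i.2.1 : Set X)) ∩ ↑F,
        ((T.prodMap T) ^ n) ⁻¹' ((i.1 : Set X) ×ˢ (i.2.1 : Set X))) :=
      Set.Finite.isOpen_biInter hfin fun n _ =>
        ((T.prodMap T) ^ n).continuous.isOpen_preimage _ ((hBopen i.1).prod (hBopen i.2.1))
    have hzΘ : z ∈ ⋂ n ∈ retSet (T.prodMap T) z ((i.1 : Set X) ×ˢ (i.2.1 : Set X)) ∩ ↑F,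
        ((T.prodMap T) ^ n) ⁻¹' ((i.1 : Set X) ×ˢ (i.2.1 : Set X)) :=
      Set.mem_iInter₂.2 fun n hn => hn.1
    have hΘsub : (⋂ n ∈ retSet (T.prodMap T) z ((i.1 : Set X) ×ˢ (i.2.1 : Set X)) ∩ ↑F,
        ((T.prodMap T) ^ n) ⁻¹' ((i.1 : Set X) ×ˢ (i.2.1 : Set X))) ⊆
        {w : X × X |
          retSet (T.prodMap T) w ((i.1 : Set X) ×ˢ (i.2.1 : Set X)) ∈ fam (δf i.1 i.2.1) i.2.2} := by
      intro w hw
      exact hF _ fun n hn => Set.mem_iInter₂.1 hw n hn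
    exact ⟨z, hsubΩ ⟨hz1, hz2⟩, mem_interior.2 ⟨_, hΘsub, hΘopen, hzΘ⟩⟩
  have hdense : Dense (⋂ i, Gset i) := dense_iInter_of_isOpen hGopen hGdense
  obtain ⟨zs, hzs⟩ := hdense.nonempty
  refine ⟨zs, ?_⟩
  intro W hW hWne
  obtain ⟨⟨w1, w2⟩, hw⟩ := hWne
  obtain ⟨O1, O2, hO1, hO2, hw1, hw2, hsubW⟩ := isOpen_prod_iff.1 hW w1 w2 hw
  obtain ⟨B1, hB1b, hw1B1, hB1sub⟩ := hb.exists_subset_of_mem_open hw1 hO1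
  obtain ⟨B2, hB2b, hw2B2, hB2sub⟩ := hb.exists_subset_of_mem_open hw2 hO2
  have hmem : retSet (T.prodMap T) zs (B1 ×ˢ B2) ∈ Adelta (δf ⟨B1, hB1b⟩ ⟨B2, hB2b⟩) := by
    rw [hAdelta]
    refine Set.mem_iInter.2 fun μ => ?_
    have h := Set.mem_iInter.1 hzs (⟨B1, hB1b⟩, ⟨B2, hB2b⟩, μ)
    simp only [hGset] at h
    have h2 : zs ∈ {w : X × X | retSet (T.prodMap T) w ((B1 : Set X) ×ˢ (B2 : Set X)) ∈
        fam (δf ⟨B1, hB1b⟩ ⟨B2, hB2b⟩) μ} := interior_subset h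
    exact h2
  refine hup _ _ (by rw [h𝒜]; exact Set.mem_iUnion.2 ⟨_, hmem⟩) ?_
  intro n hn
  exact ((Set.prod_mono hB1sub hB2sub).trans hsubW) hn
end

section
/- Let A be an upper Furstenberg family, with decomposition A = ∪_{δ∈D} A_δ, satisfying: (1) for every δ' ∈ D there exists δ ∈ D such that for all k ≥ 0 and all A ∈ A_{δ'}, one has A − k ∈ A_δ; (2) for every A ∈ A there exists δ ∈ D such that {k ≥ 0 : A ∩ (A − k) ∈ A_δ} has bounded gaps. If a bounded operator T on a separable infinite-dimensional Banach space X is A-hypercyclic, then for every n ≥ 1 the n-fold product T × ⋯ × T is A-hypercyclic. -/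
open Filter Topology

section Stmt9Aux

open Set

namespace Stmt9Aux

/-- Bundle of the Furstenberg-family hypotheses. -/
structure UFF {D M : Type*} (fam : D → M → Set (Set ℕ)) (Adelta : D → Set (Set ℕ))
    (𝒜 : Set (Set ℕ)) : Prop where
  hAdelta : ∀ δ : D, Adelta δ = ⋂ μ : M, fam δ μ
  hA : 𝒜 = ⋃ δ : D, Adelta δ
  hempty : ∅ ∉ 𝒜
  hup : ∀ A B : Set ℕ, A ∈ 𝒜 → A ⊆ B → B ∈ 𝒜
  hi : ∀ (δ : D) (μ : M), ∀ A ∈ fam δ μ, ∃ F : Finset ℕ,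
      ∀ B : Set ℕ, A ∩ ↑F ⊆ B → B ∈ fam δ μ
  hii : ∀ A ∈ 𝒜, ∃ δ : D, ∀ n : ℕ, shiftSet A n ∈ Adelta δ
  h1 : ∀ δ' : D, ∃ δ : D, ∀ k : ℕ, ∀ A ∈ Adelta δ', shiftSet A k ∈ Adelta δ
  h2 : ∀ A ∈ 𝒜, ∃ δ : D, Syndetic {k : ℕ | A ∩ shiftSet A k ∈ Adelta δ}

variable {D M : Type*} {fam : D → M → Set (Set ℕ)} {Adelta : D → Set (Set ℕ)}
  {𝒜 : Set (Set ℕ)}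

theorem UFF.adelta_sub (H : UFF fam Adelta 𝒜) (δ : D) : Adelta δ ⊆ 𝒜 := by
  rw [H.hA]; exact Set.subset_iUnion Adelta δ

theorem UFF.nonempty (H : UFF fam Adelta 𝒜) {B : Set ℕ} (hB : B ∈ 𝒜) : B.Nonempty := by
  rcases Set.eq_empty_or_nonempty B with h | h
  · exact absurd (h ▸ hB) H.hempty
  · exact h

theorem UFF.fam_mono (H : UFF fam Adelta 𝒜) {δ : D} {μ : M} {A B : Set ℕ}
    (hA : A ∈ fam δ μ) (hAB : A ⊆ B) : B ∈ fam δ μ := by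
  obtain ⟨F, hF⟩ := H.hi δ μ A hA
  exact hF B (le_trans Set.inter_subset_left hAB)

theorem UFF.adelta_mono (H : UFF fam Adelta 𝒜) {δ : D} {A B : Set ℕ}
    (hA : A ∈ Adelta δ) (hAB : A ⊆ B) : B ∈ Adelta δ := by
  rw [H.hAdelta] at hA ⊢
  exact Set.mem_iInter.2 fun μ => H.fam_mono (Set.mem_iInter.1 hA μ) hAB

variable {Y : Type*} [NormedAddCommGroup Y] [NormedSpace ℂ Y]

theorem pow_apply_add (S : Y →L[ℂ] Y) (a b : ℕ) (y : Y) :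
    (S ^ a) ((S ^ b) y) = (S ^ (a + b)) y := by
  rw [pow_add]; rfl

theorem retSet_orbit (S : Y →L[ℂ] Y) (x : Y) (a : ℕ) (U : Set Y) :
    retSet S ((S ^ a) x) U = shiftSet (retSet S x U) a := by
  ext t
  simp only [retSet, shiftSet, Set.mem_setOf_eq, pow_apply_add]

section Dyn

variable (H : UFF fam Adelta 𝒜) (S : Y →L[ℂ] Y) (x : Y)
  (hx : ∀ U : Set Y, IsOpen U → U.Nonempty → retSet S x U ∈ 𝒜)

include H hx

theorem visit_ge {U : Set Y} (hUo : IsOpen U) (hUne : U.Nonempty) (N : ℕ) :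
    ∃ t, N ≤ t ∧ (S ^ t) x ∈ U := by
  obtain ⟨δ, hδ⟩ := H.hii _ (hx U hUo hUne)
  obtain ⟨s, hs⟩ := H.nonempty (H.adelta_sub δ (hδ N))
  exact ⟨s + N, Nat.le_add_left _ _, hs⟩

theorem trans_lem {P Q : Set Y} (hPo : IsOpen P) (hPne : P.Nonempty)
    (hQo : IsOpen Q) (hQne : Q.Nonempty) :
    ∃ g : ℕ, ∃ p ∈ P, (S ^ g) p ∈ Q := by
  obtain ⟨σ, -, hσ⟩ := visit_ge H S x hx hPo hPne 0
  obtain ⟨τ, hτ1, hτ2⟩ := visit_ge H S x hx hQo hQne σ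
  refine ⟨τ - σ, (S ^ σ) x, hσ, ?_⟩
  rw [pow_apply_add]
  have : τ - σ + σ = τ := by omega
  rw [this]; exact hτ2

theorem synd_lem {P Q : Set Y} (hPo : IsOpen P) (hPne : P.Nonempty)
    (hQo : IsOpen Q) (hQne : Q.Nonempty) :
    ∃ m : ℕ, ∀ b : ℕ, ∃ d, b ≤ d ∧ d ≤ b + m ∧ ∃ p ∈ P, (S ^ d) p ∈ Q := by
  obtain ⟨g, p₀, hp₀, hgp₀⟩ := trans_lem H S x hx hPo hPne hQo hQne
  set Z : Set Y := P ∩ (S ^ g) ⁻¹' Q with hZ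
  have hZo : IsOpen Z := hPo.inter (hQo.preimage (S ^ g).continuous)
  have hZne : Z.Nonempty := ⟨p₀, hp₀, hgp₀⟩
  obtain ⟨δ, mK, hK⟩ := H.h2 _ (hx Z hZo hZne)
  refine ⟨g + mK, fun b => ?_⟩
  obtain ⟨k, hkK, hkIcc⟩ := hK b
  rw [Set.mem_Icc] at hkIcc
  have hknon : (retSet S x Z ∩ shiftSet (retSet S x Z) k).Nonempty :=
    H.nonempty (H.adelta_sub δ hkK)
  obtain ⟨τ, hτ1, hτ2⟩ := hknon
  refine ⟨k + g, by omega, by omega, (S ^ τ) x, hτ1.1, ?_⟩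
  rw [pow_apply_add]
  have h2' : (S ^ (τ + k)) x ∈ Z := hτ2
  have : k + g + τ = g + (τ + k) := by omega
  rw [this, ← pow_apply_add]
  exact h2'.2

theorem thick_lem {V W : Set Y} (hVo : IsOpen V) (hVne : V.Nonempty)
    (hWo : IsOpen W) (hWne : W.Nonempty) (L E₀ : ℕ) :
    ∃ e₀, E₀ ≤ e₀ ∧ ∀ r ≤ L, ∃ p ∈ V, (S ^ (e₀ + r)) p ∈ W := by
  obtain ⟨v, hv⟩ := hVne
  obtain ⟨ρv, hρv, hballv⟩ := Metric.isOpen_iff.1 hVo v hv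
  obtain ⟨w, hw⟩ := hWne
  obtain ⟨ρw, hρw, hballw⟩ := Metric.isOpen_iff.1 hWo w hw
  set ε' : ℝ := ρv / 2 with hε'
  set ε : ℝ := ρw / 2 with hε
  have hε'pos : 0 < ε' := by positivity
  have hεpos : 0 < ε := by positivity
  -- the small open set Ω₂ of points whose first L iterates are small
  set Ω₂ : Set Y := ⋂ j ∈ Finset.range (L + 1), (S ^ j) ⁻¹' Metric.ball 0 ε' with hΩ₂
  have hΩ₂o : IsOpen Ω₂ := by
    apply Set.Finite.isOpen_biInter (Finset.range (L + 1)).finite_toSet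
    exact fun j _ => (Metric.isOpen_ball).preimage (S ^ j).continuous
  have hΩ₂ne : Ω₂.Nonempty := by
    refine ⟨0, Set.mem_iInter₂.2 fun j _ => ?_⟩
    simp [Metric.mem_ball, hε'pos]
  obtain ⟨m₂, hm₂⟩ := synd_lem H S x hx hΩ₂o hΩ₂ne Metric.isOpen_ball ⟨w, Metric.mem_ball_self hεpos⟩
  set Mb := L + m₂ with hMb
  set C : ℝ := ∑ j ∈ Finset.range (Mb + 1), ‖S ^ j‖ with hC
  have hC0 : 0 ≤ C := Finset.sum_nonneg fun j _ => norm_nonneg _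
  set τ : ℝ := ε / (C + 1) with hτ
  have hτpos : 0 < τ := by positivity
  obtain ⟨m₁, hm₁⟩ := synd_lem H S x hx Metric.isOpen_ball ⟨v, Metric.mem_ball_self hε'pos⟩
    Metric.isOpen_ball ⟨0, Metric.mem_ball_self hτpos⟩
  obtain ⟨d, hd1, hd2, z, hzv, hzd⟩ := hm₁ E₀
  obtain ⟨t, ht1, ht2, u, huΩ, hut⟩ := hm₂ (d + L)
  set i := t - (d + L) with hi'
  have hti : t = d + L + i := by omega
  refine ⟨d + i, by omega, fun r hr => ?_⟩
  have hucond : ∀ j ≤ L, (S ^ j) u ∈ Metric.ball (0 : Y) ε' := by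
    intro j hj
    have := Set.mem_iInter₂.1 huΩ j (Finset.mem_range.2 (by omega))
    exact this
  refine ⟨z + (S ^ (L - r)) u, ?_, ?_⟩
  · apply hballv
    rw [Metric.mem_ball]
    calc dist (z + (S ^ (L - r)) u) v ≤ dist z v + ‖(S ^ (L - r)) u‖ := by
          rw [dist_eq_norm, dist_eq_norm]
          calc ‖z + (S ^ (L - r)) u - v‖ = ‖(z - v) + (S ^ (L - r)) u‖ := by rw [add_sub_right_comm]
            _ ≤ ‖z - v‖ + ‖(S ^ (L - r)) u‖ := norm_add_le _ _
      _ < ε' + ε' := by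
          apply add_lt_add
          · exact Metric.mem_ball.1 hzv
          · have := hucond (L - r) (by omega)
            rwa [Metric.mem_ball, dist_zero_right] at this
      _ = ρv := by rw [hε']; ring
  · apply hballw
    rw [Metric.mem_ball]
    have hh1 : (S ^ (i + r)) ((S ^ d) z) = (S ^ (d + i + r)) z := by
      rw [pow_apply_add, show i + r + d = d + i + r from by omega]
    have hh2 : (S ^ t) u = (S ^ (d + i + r)) ((S ^ (L - r)) u) := by
      rw [pow_apply_add, show d + i + r + (L - r) = t from by omega]
    have hsplit : (S ^ (d + i + r)) (z + (S ^ (L - r)) u)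
        = (S ^ (i + r)) ((S ^ d) z) + (S ^ t) u := by
      rw [map_add, hh1, hh2]
    rw [hsplit]
    have h1n : ‖(S ^ (i + r)) ((S ^ d) z)‖ < ε := by
      have hle : ‖(S ^ (i + r)) ((S ^ d) z)‖ ≤ ‖S ^ (i + r)‖ * ‖(S ^ d) z‖ :=
        (S ^ (i + r)).le_opNorm _
      have hSC : ‖S ^ (i + r)‖ ≤ C := by
        rw [hC]
        apply Finset.single_le_sum (f := fun j => ‖S ^ j‖) (fun j _ => norm_nonneg _)
        apply Finset.mem_range.2
        omega
      have hzd' : ‖(S ^ d) z‖ < τ := by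
        have := Metric.mem_ball.1 hzd; rwa [dist_zero_right] at this
      calc ‖(S ^ (i + r)) ((S ^ d) z)‖ ≤ ‖S ^ (i + r)‖ * ‖(S ^ d) z‖ := hle
        _ ≤ C * ‖(S ^ d) z‖ := by
            apply mul_le_mul_of_nonneg_right hSC (norm_nonneg _)
        _ ≤ C * τ := by
            apply mul_le_mul_of_nonneg_left (le_of_lt hzd') hC0
        _ < ε := by
            rw [hτ]
            calc C * (ε / (C + 1)) = ε * (C / (C + 1)) := by ring
              _ < ε * 1 := by
                  apply mul_lt_mul_of_pos_left _ hεpos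
                  rw [div_lt_one (by linarith)]
                  linarith
              _ = ε := mul_one _
    calc dist ((S ^ (i + r)) ((S ^ d) z) + (S ^ t) u) w
        ≤ ‖(S ^ (i + r)) ((S ^ d) z)‖ + dist ((S ^ t) u) w := by
          rw [dist_eq_norm, dist_eq_norm]
          calc ‖(S ^ (i + r)) ((S ^ d) z) + (S ^ t) u - w‖
              = ‖(S ^ (i + r)) ((S ^ d) z) + ((S ^ t) u - w)‖ := by rw [add_sub_assoc]
            _ ≤ _ := norm_add_le _ _
      _ < ε + ε := add_lt_add h1n (Metric.mem_ball.1 hut)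
      _ = ρw := by rw [hε]; ring

theorem pairCore {U₁ U₂ : Set Y} (hU₁o : IsOpen U₁) (hU₁ne : U₁.Nonempty)
    (hU₂o : IsOpen U₂) (hU₂ne : U₂.Nonempty) :
    ∃ δs : D, ∀ V₁ V₂ : Set Y, IsOpen V₁ → V₁.Nonempty → IsOpen V₂ → V₂.Nonempty →
      ∃ y₁ y₂ : Y, y₁ ∈ V₁ ∧ y₂ ∈ V₂ ∧
        retSet S y₁ U₁ ∩ retSet S y₂ U₂ ∈ Adelta δs := by
  obtain ⟨s₂, p₀, hp₀, hs₂⟩ := trans_lem H S x hx hU₁o hU₁ne hU₂o hU₂ne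
  set U : Set Y := U₁ ∩ (S ^ s₂) ⁻¹' U₂ with hU
  have hUo : IsOpen U := hU₁o.inter (hU₂o.preimage (S ^ s₂).continuous)
  have hUne : U.Nonempty := ⟨p₀, hp₀, hs₂⟩
  set A : Set ℕ := retSet S x U with hA
  have hAmem : A ∈ 𝒜 := hx U hUo hUne
  obtain ⟨δ₀, hsynd⟩ := H.h2 A hAmem
  obtain ⟨mK, hmK⟩ := hsynd
  obtain ⟨δs, hδs⟩ := H.h1 δ₀
  refine ⟨δs, fun V₁ V₂ hV₁o hV₁ne hV₂o hV₂ne => ?_⟩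
  obtain ⟨e₀, he₀, hthick⟩ := thick_lem H S x hx hV₁o hV₁ne hV₂o hV₂ne mK s₂
  obtain ⟨k, hkK, hkIcc⟩ := hmK (e₀ - s₂)
  rw [Set.mem_Icc] at hkIcc
  have hks : e₀ ≤ k + s₂ ∧ k + s₂ ≤ e₀ + mK := by omega
  obtain ⟨p, hpV₁, hpd⟩ := hthick (k + s₂ - e₀) (by omega)
  have hpd' : (S ^ (k + s₂)) p ∈ V₂ := by
    have : e₀ + (k + s₂ - e₀) = k + s₂ := by omega
    rwa [this] at hpd
  set Z : Set Y := V₁ ∩ (S ^ (k + s₂)) ⁻¹' V₂ with hZdef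
  have hZo : IsOpen Z := hV₁o.inter (hV₂o.preimage (S ^ (k + s₂)).continuous)
  have hZne : Z.Nonempty := ⟨p, hpV₁, hpd'⟩
  obtain ⟨σ, hσ⟩ := H.nonempty (hx Z hZo hZne)
  have hσ1 : (S ^ σ) x ∈ V₁ := hσ.1
  have hσ2 : (S ^ (σ + (k + s₂))) x ∈ V₂ := by
    have : (S ^ (k + s₂)) ((S ^ σ) x) ∈ V₂ := hσ.2
    rwa [pow_apply_add, Nat.add_comm] at this
  refine ⟨(S ^ σ) x, (S ^ (σ + (k + s₂))) x, hσ1, hσ2, ?_⟩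
  have hAk : A ∩ shiftSet A k ∈ Adelta δ₀ := hkK
  have hB : shiftSet (A ∩ shiftSet A k) σ ∈ Adelta δs := hδs σ _ hAk
  refine H.adelta_mono hB ?_
  rintro tt ⟨ht1, ht2⟩
  have ht1' : (S ^ (tt + σ)) x ∈ U := ht1
  have ht2' : (S ^ (tt + σ + k)) x ∈ U := ht2
  constructor
  · show (S ^ tt) ((S ^ σ) x) ∈ U₁
    rw [pow_apply_add]
    exact ht1'.1
  · show (S ^ tt) ((S ^ (σ + (k + s₂))) x) ∈ U₂
    rw [pow_apply_add]
    have := ht2'.2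
    have heq : (S ^ s₂) ((S ^ (tt + σ + k)) x) = (S ^ (tt + (σ + (k + s₂)))) x := by
      rw [pow_apply_add, show s₂ + (tt + σ + k) = tt + (σ + (k + s₂)) from by omega]
    rw [← heq]
    exact this

end Dyn

theorem retSet_mono (S : Y →L[ℂ] Y) (y : Y) {U V : Set Y} (hUV : U ⊆ V) :
    retSet S y U ⊆ retSet S y V := fun _ ht => hUV ht

theorem prod_pow_apply (S : Y →L[ℂ] Y) (t : ℕ) (p : Y × Y) :
    ((S.prodMap S) ^ t) p = ((S ^ t) p.1, (S ^ t) p.2) := by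
  induction t generalizing p with
  | zero => simp
  | succ n ih =>
    rw [pow_succ, pow_succ]
    show ((S.prodMap S) ^ n) ((S.prodMap S) p) = _
    rw [ih]
    rfl

theorem retSet_prod (S : Y →L[ℂ] Y) (y : Y × Y) (U₁ U₂ : Set Y) :
    retSet (S.prodMap S) y (U₁ ×ˢ U₂) = retSet S y.1 U₁ ∩ retSet S y.2 U₂ := by
  ext t
  simp only [retSet, Set.mem_setOf_eq, Set.mem_inter_iff, prod_pow_apply, Set.mem_prod]

theorem pairAHC [Countable M] [CompleteSpace Y] [SecondCountableTopology Y]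
    (H : UFF fam Adelta 𝒜) (S : Y →L[ℂ] Y) (hS : AHC 𝒜 S) :
    AHC 𝒜 (S.prodMap S) := by
  classical
  obtain ⟨x, hx⟩ := hS
  obtain ⟨b, hbc, hbne, hb⟩ := TopologicalSpace.exists_countable_basis Y
  let I : Set (Set Y × Set Y) := b ×ˢ b
  have hIc : I.Countable := hbc.prod hbc
  haveI : Countable I := hIc.to_subtype
  have hopen : ∀ q : I, IsOpen (q : Set Y × Set Y).1 ∧ IsOpen (q : Set Y × Set Y).2 ∧
      (q : Set Y × Set Y).1.Nonempty ∧ (q : Set Y × Set Y).2.Nonempty := by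
    rintro ⟨⟨q₁, q₂⟩, hq1, hq2⟩
    exact ⟨hb.isOpen hq1, hb.isOpen hq2,
      Set.nonempty_iff_ne_empty.2 fun h => hbne (h ▸ hq1),
      Set.nonempty_iff_ne_empty.2 fun h => hbne (h ▸ hq2)⟩
  have hchoice : ∀ q : I, ∃ δs : D,
      ∀ V₁ V₂ : Set Y, IsOpen V₁ → V₁.Nonempty → IsOpen V₂ → V₂.Nonempty →
        ∃ y₁ y₂ : Y, y₁ ∈ V₁ ∧ y₂ ∈ V₂ ∧
          retSet S y₁ (q : Set Y × Set Y).1 ∩ retSet S y₂ (q : Set Y × Set Y).2 ∈ Adelta δs := by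
    intro q
    obtain ⟨ho1, ho2, hn1, hn2⟩ := hopen q
    exact pairCore H S x hx ho1 hn1 ho2 hn2
  choose δf hδf using hchoice
  have hGdense : ∀ q : I, Dense {y : Y × Y |
      retSet S y.1 (q : Set Y × Set Y).1 ∩ retSet S y.2 (q : Set Y × Set Y).2
        ∈ Adelta (δf q)} := by
    intro q
    rw [dense_iff_inter_open]
    intro 𝒲 h𝒲o h𝒲ne
    obtain ⟨⟨p₁, p₂⟩, hp⟩ := h𝒲ne
    obtain ⟨V₁, V₂, hV₁o, hV₂o, hp₁, hp₂, hVsub⟩ := isOpen_prod_iff.1 h𝒲o p₁ p₂ hp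
    obtain ⟨y₁, y₂, hy₁, hy₂, hmem⟩ := hδf q V₁ V₂ hV₁o ⟨p₁, hp₁⟩ hV₂o ⟨p₂, hp₂⟩
    exact ⟨(y₁, y₂), hVsub (Set.mk_mem_prod hy₁ hy₂), hmem⟩
  have hOopen : ∀ (q : I) (μ : M), IsOpen {y : Y × Y |
      retSet S y.1 (q : Set Y × Set Y).1 ∩ retSet S y.2 (q : Set Y × Set Y).2
        ∈ fam (δf q) μ} := by
    intro q μ
    rw [isOpen_iff_forall_mem_open]
    intro y hy
    obtain ⟨F, hF⟩ := H.hi (δf q) μ _ hy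
    refine ⟨⋂ t ∈ F.filter (fun t =>
        t ∈ retSet S y.1 (q : Set Y × Set Y).1 ∩ retSet S y.2 (q : Set Y × Set Y).2),
      {z : Y × Y | (S ^ t) z.1 ∈ (q : Set Y × Set Y).1 ∧ (S ^ t) z.2 ∈ (q : Set Y × Set Y).2},
      ?_, ?_, ?_⟩
    · intro z hz
      refine hF _ ?_
      rintro t ⟨htR, htF⟩
      have htf : t ∈ F.filter (fun t =>
          t ∈ retSet S y.1 (q : Set Y × Set Y).1 ∩ retSet S y.2 (q : Set Y × Set Y).2) :=
        Finset.mem_filter.2 ⟨htF, htR⟩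
      have := Set.mem_iInter₂.1 hz t htf
      exact ⟨this.1, this.2⟩
    · apply Set.Finite.isOpen_biInter (Finset.finite_toSet _)
      intro t _
      have : {z : Y × Y | (S ^ t) z.1 ∈ (q : Set Y × Set Y).1 ∧
          (S ^ t) z.2 ∈ (q : Set Y × Set Y).2}
          = ((fun z : Y × Y => (S ^ t) z.1) ⁻¹' (q : Set Y × Set Y).1)
            ∩ ((fun z : Y × Y => (S ^ t) z.2) ⁻¹' (q : Set Y × Set Y).2) := rfl
      rw [this]
      exact ((hopen q).1.preimage ((S ^ t).continuous.comp continuous_fst)).inter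
        ((hopen q).2.1.preimage ((S ^ t).continuous.comp continuous_snd))
    · apply Set.mem_iInter₂.2
      intro t htf
      have := (Finset.mem_filter.1 htf).2
      exact ⟨this.1, this.2⟩
  have h𝒢 : (⋂ (q : I), ⋂ (μ : M), {y : Y × Y |
      retSet S y.1 (q : Set Y × Set Y).1 ∩ retSet S y.2 (q : Set Y × Set Y).2
        ∈ fam (δf q) μ}) ∈ residual (Y × Y) := by
    apply countable_iInter_mem.2
    intro q
    apply countable_iInter_mem.2
    intro μ
    apply residual_of_dense_open (hOopen q μ)
    apply Dense.mono _ (hGdense q)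
    intro y hy
    have hy' : retSet S y.1 (q : Set Y × Set Y).1 ∩ retSet S y.2 (q : Set Y × Set Y).2
        ∈ Adelta (δf q) := hy
    rw [H.hAdelta] at hy'
    exact Set.mem_iInter.1 hy' μ
  obtain ⟨y, hy⟩ := (dense_of_mem_residual h𝒢).nonempty
  refine ⟨y, fun 𝒰 h𝒰o h𝒰ne => ?_⟩
  obtain ⟨⟨p₁, p₂⟩, hp⟩ := h𝒰ne
  obtain ⟨V₁, V₂, hV₁o, hV₂o, hp₁, hp₂, hVsub⟩ := isOpen_prod_iff.1 h𝒰o p₁ p₂ hp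
  obtain ⟨U₁, hU₁b, hpU₁, hU₁sub⟩ := hb.exists_subset_of_mem_open hp₁ hV₁o
  obtain ⟨U₂, hU₂b, hpU₂, hU₂sub⟩ := hb.exists_subset_of_mem_open hp₂ hV₂o
  have hqI : ((U₁, U₂) : Set Y × Set Y) ∈ I := Set.mk_mem_prod hU₁b hU₂b
  have hyq : retSet S y.1 U₁ ∩ retSet S y.2 U₂ ∈ Adelta (δf ⟨(U₁, U₂), hqI⟩) := by
    rw [H.hAdelta]
    apply Set.mem_iInter.2
    intro μ
    exact Set.mem_iInter.1 (Set.mem_iInter.1 hy ⟨(U₁, U₂), hqI⟩) μ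
  apply H.hup _ _ (H.adelta_sub _ hyq)
  rw [← retSet_prod]
  apply retSet_mono
  intro z hz
  exact hVsub ⟨hU₁sub hz.1, hU₂sub hz.2⟩

theorem factorAHC {Y Z : Type*} [NormedAddCommGroup Y] [NormedSpace ℂ Y]
    [NormedAddCommGroup Z] [NormedSpace ℂ Z]
    (𝒜 : Set (Set ℕ)) (SY : Y →L[ℂ] Y) (SZ : Z →L[ℂ] Z) (Φ : Y →L[ℂ] Z)
    (hsurj : Function.Surjective Φ) (hcomm : ∀ y, Φ (SY y) = SZ (Φ y))
    (h : AHC 𝒜 SY) : AHC 𝒜 SZ := by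
  obtain ⟨x, hx⟩ := h
  have hcommn : ∀ (t : ℕ) (y : Y), Φ ((SY ^ t) y) = (SZ ^ t) (Φ y) := by
    intro t
    induction t with
    | zero => intro y; simp
    | succ n ih =>
      intro y
      rw [pow_succ, pow_succ]
      show Φ ((SY ^ n) (SY y)) = (SZ ^ n) (SZ (Φ y))
      rw [← hcomm y, ih (SY y)]
  refine ⟨Φ x, fun U hUo hUne => ?_⟩
  have hret : retSet SZ (Φ x) U = retSet SY x (Φ ⁻¹' U) := by
    ext t
    simp only [retSet, Set.mem_setOf_eq, Set.mem_preimage, hcommn]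
  rw [hret]
  apply hx
  · exact hUo.preimage Φ.continuous
  · obtain ⟨u, hu⟩ := hUne
    obtain ⟨y, hy⟩ := hsurj u
    exact ⟨y, by rw [Set.mem_preimage, hy]; exact hu⟩

theorem nfold_apply {X : Type*} [NormedAddCommGroup X] [NormedSpace ℂ X]
    (T : X →L[ℂ] X) (n : ℕ) (w : Fin n → X) (i : Fin n) :
    nfold T n w i = T (w i) := by
  simp [nfold]

end Stmt9Aux

end Stmt9Aux

/-- If `𝒜 = ⋃_δ 𝒜_δ` is an upper Furstenberg family satisfying the two shift/syndeticity
conditions, and `T` is `𝒜`-hypercyclic, then every `n`-fold product `T × ⋯ × T` (`n ≥ 1`)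
is `𝒜`-hypercyclic. -/
theorem stmt_9 {D : Type*} {M : Type*} [Countable M]
    (fam : D → M → Set (Set ℕ)) (Adelta : D → Set (Set ℕ)) (𝒜 : Set (Set ℕ))
    (hAdelta : ∀ δ : D, Adelta δ = ⋂ μ : M, fam δ μ)
    (h𝒜 : 𝒜 = ⋃ δ : D, Adelta δ)
    (hne : 𝒜.Nonempty) (hempty : ∅ ∉ 𝒜)
    (hup : ∀ A B : Set ℕ, A ∈ 𝒜 → A ⊆ B → B ∈ 𝒜)
    (hi : ∀ (δ : D) (μ : M), ∀ A ∈ fam δ μ, ∃ F : Finset ℕ,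
      ∀ B : Set ℕ, A ∩ ↑F ⊆ B → B ∈ fam δ μ)
    (hii : ∀ A ∈ 𝒜, ∃ δ : D, ∀ n : ℕ, shiftSet A n ∈ Adelta δ)
    (h1 : ∀ δ' : D, ∃ δ : D, ∀ k : ℕ, ∀ A ∈ Adelta δ', shiftSet A k ∈ Adelta δ)
    (h2 : ∀ A ∈ 𝒜, ∃ δ : D, Syndetic {k : ℕ | A ∩ shiftSet A k ∈ Adelta δ})
    {X : Type*} [NormedAddCommGroup X] [NormedSpace ℂ X] [CompleteSpace X]
    [TopologicalSpace.SeparableSpace X] (hX : ¬FiniteDimensional ℂ X)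
    (T : X →L[ℂ] X) (hT : AHC 𝒜 T) (n : ℕ) (hn : 1 ≤ n) :
    AHC 𝒜 (nfold T n) := by
  classical
  have H : Stmt9Aux.UFF fam Adelta 𝒜 := ⟨hAdelta, h𝒜, hempty, hup, hi, hii, h1, h2⟩
  haveI : SecondCountableTopology X := UniformSpace.secondCountable_of_separable X
  induction n, hn using Nat.le_induction with
  | base =>
    refine Stmt9Aux.factorAHC 𝒜 T (nfold T 1)
      (ContinuousLinearMap.pi fun _ : Fin 1 => ContinuousLinearMap.id ℂ X) ?_ ?_ hT
    · intro v
      refine ⟨v 0, funext fun i => ?_⟩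
      have hi0 : i = 0 := Subsingleton.elim i 0
      rw [hi0]
      simp
    · intro y
      funext i
      simp [nfold, ContinuousLinearMap.pi_apply]
  | succ n hn ih =>
    have hpair := Stmt9Aux.pairAHC H (nfold T n) ih
    have hnpos : 0 < n := hn
    refine Stmt9Aux.factorAHC 𝒜 ((nfold T n).prodMap (nfold T n)) (nfold T (n + 1))
      (ContinuousLinearMap.pi fun i : Fin (n + 1) =>
        if h : (i : ℕ) < n then
          (ContinuousLinearMap.proj (⟨(i : ℕ), h⟩ : Fin n)).comp
            (ContinuousLinearMap.fst ℂ (Fin n → X) (Fin n → X))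
        else
          (ContinuousLinearMap.proj (⟨0, hnpos⟩ : Fin n)).comp
            (ContinuousLinearMap.snd ℂ (Fin n → X) (Fin n → X))) ?_ ?_ hpair
    · intro v
      refine ⟨(fun j : Fin n => v (Fin.castSucc j), fun _ : Fin n => v (Fin.last n)),
        funext fun i => ?_⟩
      simp only [ContinuousLinearMap.pi_apply]
      by_cases h : (i : ℕ) < n
      · rw [dif_pos h]
        simp only [ContinuousLinearMap.comp_apply, ContinuousLinearMap.coe_fst',
          ContinuousLinearMap.proj_apply]
        exact congrArg v (Fin.ext rfl)
      · rw [dif_neg h]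
        simp only [ContinuousLinearMap.comp_apply, ContinuousLinearMap.coe_snd',
          ContinuousLinearMap.proj_apply]
        have hin : (i : ℕ) = n := by omega
        exact congrArg v (Fin.ext (by simp only [Fin.val_last]; omega))
    · intro p
      funext i
      simp only [ContinuousLinearMap.pi_apply, Stmt9Aux.nfold_apply,
        ContinuousLinearMap.coe_prodMap', Prod.map_fst, Prod.map_snd]
      by_cases h : (i : ℕ) < n
      · rw [dif_pos h]
        simp [ContinuousLinearMap.comp_apply, ContinuousLinearMap.coe_fst',
          ContinuousLinearMap.proj_apply, Stmt9Aux.nfold_apply]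
      · rw [dif_neg h]
        simp [ContinuousLinearMap.comp_apply, ContinuousLinearMap.coe_snd',
          ContinuousLinearMap.proj_apply, Stmt9Aux.nfold_apply]
end
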